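/- arXiv:1407.4113 — 8 statements merged into one kernel-verified Lean document; each statement's English description precedes it below -/
import Mathlib

section
/- Assume moreover that among any three pairwise distinct indices i, j, k at least one of the pairs satisfies p = 0 (no triangles in the Dynkin diagram). A cubic form C on Y, with associated forms B and T, is W-invariant if and only if: (1) C(e_i) = 0 for all i; (2) B(e_j, e_i) = p(j, i)·B(e_i, e_j) for all i ≠ j; and (3) for all pairwise distinct i, j, k, both T(e_i, e_j, e_k) = 0 and p(j, i)·B(e_i, e_k) + p(k, i)·B(e_i, e_j) = 0. -/
/-- `p : Fin n → Fin n → ℤ` is a generalized Cartan matrix. -/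
def IsGCM {n : ℕ} (p : Fin n → Fin n → ℤ) : Prop :=
  (∀ i, p i i = 2) ∧ (∀ i j, i ≠ j → p i j ≤ 0) ∧ (∀ i j, i ≠ j → (p i j = 0 ↔ p j i = 0))

/-- The simple reflection `s_j(y) = y − α_j(y)·e_j`, where `α_j(e_i) = p i j`. -/
def simpleRefl {n : ℕ} (p : Fin n → Fin n → ℤ) (j : Fin n) (y : Fin n → ℤ) : Fin n → ℤ :=
  y - (∑ i, y i * p i j) • Pi.single j 1

/-- `C : ℤⁿ → ℤ` is a cubic form. -/
def IsCubicForm {n : ℕ} (C : (Fin n → ℤ) → ℤ) : Prop :=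
  ∃ P : MvPolynomial (Fin n) ℤ, P.IsHomogeneous 3 ∧ ∀ y, C y = MvPolynomial.eval y P

/-- The form `B` associated to a cubic form `C`. -/
def assocB {n : ℕ} (C : (Fin n → ℤ) → ℤ) (y₁ y₂ : Fin n → ℤ) : ℤ :=
  (C (y₂ + y₁) + C (y₂ - y₁)) / 2 - C y₂

/-- The form `T` associated to a cubic form `C`. -/
def assocT {n : ℕ} (C : (Fin n → ℤ) → ℤ) (y₁ y₂ y₃ : Fin n → ℤ) : ℤ :=
  C (y₁ + y₂ + y₃) - C (y₁ + y₂) - C (y₂ + y₃) - C (y₁ + y₃) + C y₁ + C y₂ + C y₃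

section Auxiliary

open MvPolynomial

/-- A monomial of degree 3 is a product of three coordinates. -/
lemma mono3 {n : ℕ} (d : Fin n →₀ ℕ) (hd : d.degree = 3) :
    ∃ i j l : Fin n, ∀ w : Fin n → ℤ, (∏ i, w i ^ d i) = w i * w j * w l := by
  have hc : Multiset.card d.toMultiset = 3 := by
    rw [Finsupp.card_toMultiset]
    exact hd
  obtain ⟨i, j, l, h⟩ := Multiset.card_eq_three.mp hc
  refine ⟨i, j, l, fun w => ?_⟩
  have h1 : (∏ i, w i ^ d i) = d.prod fun a k => w a ^ k := by
    rw [Finsupp.prod]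
    refine (Finset.prod_subset (Finset.subset_univ _) ?_).symm
    intro x _ hx
    simp [Finsupp.notMem_support_iff.mp hx]
  have h2 : d.prod (fun a k => w a ^ k) = (d.toMultiset.map w).prod := by
    rw [Finsupp.toMultiset_map, Finsupp.prod_toMultiset,
      Finsupp.prod_mapDomain_index (fun a => pow_zero a) (fun a b c => pow_add _ _ _)]
  rw [h1, h2, h]
  simp [mul_assoc]

/-- Master reduction: a divisibility (or, with `m = 0`, an identity) for a linear combination of
values of a cubic form follows from the corresponding fact for all products of three additive
maps. -/
lemma cubic_dvd {n : ℕ} {C : (Fin n → ℤ) → ℤ} (hC : IsCubicForm C) (m : ℤ) {N : ℕ}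
    (c : Fin N → ℤ) (v : Fin N → Fin n → ℤ)
    (H : ∀ f g h : (Fin n → ℤ) →+ ℤ, m ∣ ∑ k, c k * (f (v k) * g (v k) * h (v k))) :
    m ∣ ∑ k, c k * C (v k) := by
  obtain ⟨P, hP, hCP⟩ := hC
  simp only [hCP, eval_eq']
  have : ∑ k, c k * ∑ d ∈ P.support, P.coeff d * ∏ i, v k i ^ d i
      = ∑ d ∈ P.support, P.coeff d * ∑ k, c k * ∏ i, v k i ^ d i := by
    simp_rw [Finset.mul_sum]
    rw [Finset.sum_comm]
    congr 1; ext d; congr 1; ext k; ring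
  rw [this]
  refine Finset.dvd_sum fun d hd => ?_
  have hdeg : d.degree = 3 := by
    by_contra hne
    exact (mem_support_iff.mp hd) (hP.coeff_eq_zero hne)
  obtain ⟨i, j, l, hijl⟩ := mono3 d hdeg
  have := H (Pi.evalAddMonoidHom (fun _ : Fin n => ℤ) i)
    (Pi.evalAddMonoidHom (fun _ : Fin n => ℤ) j) (Pi.evalAddMonoidHom (fun _ : Fin n => ℤ) l)
  simp only [Pi.evalAddMonoidHom_apply] at this
  refine Dvd.dvd.mul_left ?_ _
  simpa only [hijl] using this

variable {n : ℕ} {C : (Fin n → ℤ) → ℤ}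

lemma cubic_eq (hC : IsCubicForm C) {N : ℕ} (c : Fin N → ℤ) (v : Fin N → Fin n → ℤ)
    (H : ∀ f g h : (Fin n → ℤ) →+ ℤ, ∑ k, c k * (f (v k) * g (v k) * h (v k)) = 0) :
    ∑ k, c k * C (v k) = 0 := by
  rw [← zero_dvd_iff]
  exact cubic_dvd hC 0 c v fun f g h => by rw [zero_dvd_iff]; exact H f g h

lemma two_assocB (hC : IsCubicForm C) (x y : Fin n → ℤ) :
    2 * assocB C x y = C (y + x) + C (y - x) - 2 * C y := by
  have hdvd : (2:ℤ) ∣ C (y + x) + C (y - x) := by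
    have := cubic_dvd hC 2 ![1,1] ![y+x, y-x] (by
      intro f g h
      simp only [Fin.sum_univ_succ, Fin.sum_univ_zero, Matrix.cons_val_zero, Matrix.cons_val_succ,
        map_add, map_sub, one_mul, add_zero]
      exact ⟨f y * g y * h y + f y * g x * h x + f x * g y * h x + f x * g x * h y, by ring⟩)
    simpa [Fin.sum_univ_succ] using this
  unfold assocB
  rw [mul_sub, Int.mul_ediv_cancel' hdvd]

lemma L_B2add (hC : IsCubicForm C) (x y z : Fin n → ℤ) :
    assocB C x (y + z) = assocB C x y + assocB C x z := by
  have hid := cubic_eq hC ![1,1,-2,-1,-1,2,-1,-1,2] ![y+z+x, y+z-x, y+z, y+x, y-x, y, z+x, z-x, z]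
    (by intro f g h; simp only [Fin.sum_univ_succ, Fin.sum_univ_zero, Matrix.cons_val_zero,
          Matrix.cons_val_succ, map_add, map_sub, map_neg, add_zero]; ring)
  simp only [Fin.sum_univ_succ, Fin.sum_univ_zero, Matrix.cons_val_zero, Matrix.cons_val_succ,
    add_zero] at hid
  refine mul_left_cancel₀ (a := (2:ℤ)) (by norm_num) ?_
  linear_combination two_assocB hC x (y+z) - two_assocB hC x y - two_assocB hC x z + hid

lemma L_B2smul (hC : IsCubicForm C) (t : ℤ) (x y : Fin n → ℤ) :
    assocB C x (t • y) = t * assocB C x y := by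
  have hid := cubic_eq hC ![1,1,-2,-t,-t,2*t] ![t•y+x, t•y-x, t•y, y+x, y-x, y]
    (by intro f g h; simp only [Fin.sum_univ_succ, Fin.sum_univ_zero, Matrix.cons_val_zero,
          Matrix.cons_val_succ, map_add, map_sub, map_zsmul, smul_eq_mul, add_zero]; ring)
  simp only [Fin.sum_univ_succ, Fin.sum_univ_zero, Matrix.cons_val_zero, Matrix.cons_val_succ,
    add_zero] at hid
  refine mul_left_cancel₀ (a := (2:ℤ)) (by norm_num) ?_
  linear_combination two_assocB hC x (t•y) - t * two_assocB hC x y + hid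

lemma L_B1add (hC : IsCubicForm C) (x y z : Fin n → ℤ) :
    assocB C (y + z) x = assocB C y x + assocB C z x + assocT C y z x := by
  have hid := cubic_eq hC ![1,1,-2,-1,-1,2,-1,-1,2,-2,2,2,2,-2,-2,-2]
    ![x+(y+z), x-(y+z), x, x+y, x-y, x, x+z, x-z, x, y+z+x, y+z, z+x, y+x, y, z, x]
    (by intro f g h; simp only [Fin.sum_univ_succ, Fin.sum_univ_zero, Matrix.cons_val_zero,
          Matrix.cons_val_succ, map_add, map_sub, add_zero]; ring)
  simp only [Fin.sum_univ_succ, Fin.sum_univ_zero, Matrix.cons_val_zero, Matrix.cons_val_succ,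
    add_zero] at hid
  refine mul_left_cancel₀ (a := (2:ℤ)) (by norm_num) ?_
  simp only [assocT]
  linear_combination two_assocB hC (y+z) x - two_assocB hC y x - two_assocB hC z x + hid

lemma L_B1smul (hC : IsCubicForm C) (t : ℤ) (x y : Fin n → ℤ) :
    assocB C (t • y) x = t^2 * assocB C y x := by
  have hid := cubic_eq hC ![1,1,-2,-t^2,-t^2,2*t^2] ![x+t•y, x-t•y, x, x+y, x-y, x]
    (by intro f g h; simp only [Fin.sum_univ_succ, Fin.sum_univ_zero, Matrix.cons_val_zero,
          Matrix.cons_val_succ, map_add, map_sub, map_zsmul, smul_eq_mul, add_zero]; ring)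
  simp only [Fin.sum_univ_succ, Fin.sum_univ_zero, Matrix.cons_val_zero, Matrix.cons_val_succ,
    add_zero] at hid
  refine mul_left_cancel₀ (a := (2:ℤ)) (by norm_num) ?_
  linear_combination two_assocB hC (t•y) x - t^2 * two_assocB hC y x + hid

lemma L_Bxx (hC : IsCubicForm C) (x : Fin n → ℤ) : assocB C x x = 3 * C x := by
  have hid := cubic_eq hC ![1,1,-8] ![x+x, x-x, x]
    (by intro f g h; simp only [Fin.sum_univ_succ, Fin.sum_univ_zero, Matrix.cons_val_zero,
          Matrix.cons_val_succ, map_add, map_sub, add_zero]; ring)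
  simp only [Fin.sum_univ_succ, Fin.sum_univ_zero, Matrix.cons_val_zero, Matrix.cons_val_succ,
    add_zero] at hid
  refine mul_left_cancel₀ (a := (2:ℤ)) (by norm_num) ?_
  linear_combination two_assocB hC x x + hid

lemma L_Tyxx (hC : IsCubicForm C) (x y : Fin n → ℤ) : assocT C y x x = 2 * assocB C x y := by
  have hid := cubic_eq hC ![1,-1,-1,-1,1,1,1,-1,-1,2] ![y+x+x, y+x, x+x, y+x, y, x, x, y+x, y-x, y]
    (by intro f g h; simp only [Fin.sum_univ_succ, Fin.sum_univ_zero, Matrix.cons_val_zero,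
          Matrix.cons_val_succ, map_add, map_sub, add_zero]; ring)
  simp only [Fin.sum_univ_succ, Fin.sum_univ_zero, Matrix.cons_val_zero, Matrix.cons_val_succ,
    add_zero] at hid
  simp only [assocT]
  linear_combination hid - two_assocB hC x y

lemma L_T1add (hC : IsCubicForm C) (w x y z : Fin n → ℤ) :
    assocT C (y + z) w x = assocT C y w x + assocT C z w x := by
  have hid := cubic_eq hC ![1,-1,-1,-1,1,1,1,-1,1,1,1,-1,-1,-1,-1,1,1,1,-1,-1,-1]
    ![y+z+w+x, y+z+w, w+x, y+z+x, y+z, w, x, y+w+x, y+w, w+x, y+x, y, w, x,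
      z+w+x, z+w, w+x, z+x, z, w, x]
    (by intro f g h; simp only [Fin.sum_univ_succ, Fin.sum_univ_zero, Matrix.cons_val_zero,
          Matrix.cons_val_succ, map_add, map_sub, add_zero]; ring)
  simp only [Fin.sum_univ_succ, Fin.sum_univ_zero, Matrix.cons_val_zero, Matrix.cons_val_succ,
    add_zero] at hid
  simp only [assocT]
  linear_combination hid

lemma L_T1smul (hC : IsCubicForm C) (t : ℤ) (w x y : Fin n → ℤ) :
    assocT C (t • y) w x = t * assocT C y w x := by
  have hid := cubic_eq hC ![1,-1,-1,-1,1,1,1,-t,t,t,t,-t,-t,-t]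
    ![t•y+w+x, t•y+w, w+x, t•y+x, t•y, w, x, y+w+x, y+w, w+x, y+x, y, w, x]
    (by intro f g h; simp only [Fin.sum_univ_succ, Fin.sum_univ_zero, Matrix.cons_val_zero,
          Matrix.cons_val_succ, map_add, map_sub, map_zsmul, smul_eq_mul, add_zero]; ring)
  simp only [Fin.sum_univ_succ, Fin.sum_univ_zero, Matrix.cons_val_zero, Matrix.cons_val_succ,
    add_zero] at hid
  simp only [assocT]
  linear_combination hid

lemma L_Tsym1 (hC : IsCubicForm C) (x y z : Fin n → ℤ) : assocT C x y z = assocT C y x z := by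
  have hid := cubic_eq hC ![1,-1,-1,-1,1,1,1,-1,1,1,1,-1,-1,-1]
    ![x+y+z, x+y, y+z, x+z, x, y, z, y+x+z, y+x, x+z, y+z, y, x, z]
    (by intro f g h; simp only [Fin.sum_univ_succ, Fin.sum_univ_zero, Matrix.cons_val_zero,
          Matrix.cons_val_succ, map_add, map_sub, add_zero]; ring)
  simp only [Fin.sum_univ_succ, Fin.sum_univ_zero, Matrix.cons_val_zero, Matrix.cons_val_succ,
    add_zero] at hid
  simp only [assocT]
  linear_combination hid

lemma L_Tsym2 (hC : IsCubicForm C) (x y z : Fin n → ℤ) : assocT C x y z = assocT C x z y := by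
  have hid := cubic_eq hC ![1,-1,-1,-1,1,1,1,-1,1,1,1,-1,-1,-1]
    ![x+y+z, x+y, y+z, x+z, x, y, z, x+z+y, x+z, z+y, x+y, x, z, y]
    (by intro f g h; simp only [Fin.sum_univ_succ, Fin.sum_univ_zero, Matrix.cons_val_zero,
          Matrix.cons_val_succ, map_add, map_sub, add_zero]; ring)
  simp only [Fin.sum_univ_succ, Fin.sum_univ_zero, Matrix.cons_val_zero, Matrix.cons_val_succ,
    add_zero] at hid
  simp only [assocT]
  linear_combination hid

lemma L_M2 (hC : IsCubicForm C) (t : ℤ) (x y : Fin n → ℤ) :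
    C (y + t • x) = C y + t * assocB C y x + t^2 * assocB C x y + t^3 * C x := by
  have hid := cubic_eq hC ![2,-2,-t,-t,2*t,-t^2,-t^2,2*t^2,-2*t^3]
    ![y+t•x, y, x+y, x-y, x, y+x, y-x, y, x]
    (by intro f g h; simp only [Fin.sum_univ_succ, Fin.sum_univ_zero, Matrix.cons_val_zero,
          Matrix.cons_val_succ, map_add, map_sub, map_zsmul, smul_eq_mul, add_zero]; ring)
  simp only [Fin.sum_univ_succ, Fin.sum_univ_zero, Matrix.cons_val_zero, Matrix.cons_val_succ,
    add_zero] at hid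
  refine mul_left_cancel₀ (a := (2:ℤ)) (by norm_num) ?_
  linear_combination hid - t * two_assocB hC y x - t^2 * two_assocB hC x y

lemma L_B1zero (hC : IsCubicForm C) (x : Fin n → ℤ) : assocB C 0 x = 0 := by
  have := L_B1smul hC 0 x 0
  simpa using this

lemma L_B2zero (hC : IsCubicForm C) (x : Fin n → ℤ) : assocB C x 0 = 0 := by
  have := L_B2smul hC 0 x 0
  simpa using this

lemma L_T1zero (hC : IsCubicForm C) (w x : Fin n → ℤ) : assocT C 0 w x = 0 := by
  have := L_T1smul hC 0 w x 0
  simpa using this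

/-- standard basis vectors -/
def ee {n : ℕ} (i : Fin n) : Fin n → ℤ := Pi.single i 1

lemma single_eq_smul {n : ℕ} (i : Fin n) (c : ℤ) : Pi.single i c = c • ee i := by
  funext l; simp [ee, Pi.single_apply]

lemma alpha_single {n : ℕ} (p : Fin n → Fin n → ℤ) (i j : Fin n) :
    (∑ l, (ee i) l * p l j) = p i j := by
  simp [ee, Pi.single_apply, ite_mul]

lemma alpha_add {n : ℕ} (p : Fin n → Fin n → ℤ) (u v : Fin n → ℤ) (j : Fin n) :
    (∑ l, (u + v) l * p l j) = (∑ l, u l * p l j) + (∑ l, v l * p l j) := by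
  simp [add_mul, Finset.sum_add_distrib]

end Auxiliary

/-- Assume the Dynkin diagram has no triangles. A cubic form `C` on `Y = ℤⁿ` is
`W`-invariant iff (1) `C(eᵢ) = 0` for all `i`, (2) `B(eⱼ, eᵢ) = p(j,i)·B(eᵢ, eⱼ)` for `i ≠ j`,
and (3) for pairwise distinct `i, j, k` both `T(eᵢ, eⱼ, eₖ) = 0` and
`p(j,i)·B(eᵢ, eₖ) + p(k,i)·B(eᵢ, eⱼ) = 0`. -/
theorem cubicForm_weylInvariant_iff {n : ℕ} (p : Fin n → Fin n → ℤ) (hp : IsGCM p)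
    (htri : ∀ i j k : Fin n, i ≠ j → j ≠ k → i ≠ k → p i j = 0 ∨ p j k = 0 ∨ p i k = 0)
    (C : (Fin n → ℤ) → ℤ) (hC : IsCubicForm C) :
    (∀ (j : Fin n) (y : Fin n → ℤ), C (simpleRefl p j y) = C y) ↔
      ((∀ i : Fin n, C (Pi.single i 1) = 0) ∧
       (∀ i j : Fin n, i ≠ j →
          assocB C (Pi.single j 1) (Pi.single i 1) =
            p j i * assocB C (Pi.single i 1) (Pi.single j 1)) ∧
       (∀ i j k : Fin n, i ≠ j → j ≠ k → i ≠ k →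
          assocT C (Pi.single i 1) (Pi.single j 1) (Pi.single k 1) = 0 ∧
          p j i * assocB C (Pi.single i 1) (Pi.single k 1) +
            p k i * assocB C (Pi.single i 1) (Pi.single j 1) = 0)) := by
  obtain ⟨hp1, hp2, hp3⟩ := hp
  have hfold : ∀ i : Fin n, (Pi.single i (1:ℤ)) = ee i := fun _ => rfl
  simp only [hfold]
  have hrepr : ∀ (j : Fin n) (y : Fin n → ℤ),
      simpleRefl p j y = y + (-(∑ i, y i * p i j)) • ee j := by
    intro j y
    unfold simpleRefl
    rw [neg_smul, ← sub_eq_add_neg]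
    rfl
  constructor
  · -- invariance implies the conditions
    intro hInv
    have homega : ∀ (j : Fin n) (y : Fin n → ℤ),
        (∑ i, y i * p i j) * assocB C y (ee j)
          = (∑ i, y i * p i j)^2 * assocB C (ee j) y - (∑ i, y i * p i j)^3 * C (ee j) := by
      intro j y
      have h := hInv j y
      rw [hrepr j y, L_M2 hC] at h
      linear_combination (-1 : ℤ) * h
    have cond1 : ∀ i, C (ee i) = 0 := by
      intro i
      have h := homega i (ee i)
      rw [alpha_single p i i, hp1 i, L_Bxx hC] at h
      linarith
    have cond2 : ∀ i j : Fin n, i ≠ j → assocB C (ee j) (ee i) = p j i * assocB C (ee i) (ee j) := by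
      intro i j hij
      have h0 := homega i (ee j)
      rw [alpha_single p j i, cond1 i] at h0
      have h1 := homega i (ee j + ee i)
      rw [alpha_add p, alpha_single p j i, alpha_single p i i, hp1 i] at h1
      have e1 : assocB C (ee j + ee i) (ee i)
          = assocB C (ee j) (ee i) + 3 * C (ee i) + 2 * assocB C (ee i) (ee j) := by
        rw [L_B1add hC, L_Bxx hC, L_Tyxx hC]
      have e2 : assocB C (ee i) (ee j + ee i) = assocB C (ee i) (ee j) + 3 * C (ee i) := by
        rw [L_B2add hC, L_Bxx hC]
      rw [e1, e2, cond1 i] at h1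
      refine mul_left_cancel₀ (a := (2:ℤ)) (by norm_num) ?_
      linear_combination h1 - h0
    have R : ∀ i k j : Fin n, i ≠ k → i ≠ j → k ≠ j →
        assocT C (ee i) (ee k) (ee j)
          = p i j * assocB C (ee j) (ee k) + p k j * assocB C (ee j) (ee i) := by
      intro i k j hik hij hkj
      have h0 := homega j (ee i + ee k)
      rw [alpha_add p, alpha_single p i j, alpha_single p k j] at h0
      have h1 := homega j ((ee i + ee k) + ee j)
      rw [alpha_add p, alpha_add p, alpha_single p i j, alpha_single p k j,
        alpha_single p j j, hp1 j] at h1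
      have e1 : assocB C ((ee i + ee k) + ee j) (ee j)
          = assocB C (ee i + ee k) (ee j) + 3 * C (ee j) + 2 * assocB C (ee j) (ee i + ee k) := by
        rw [L_B1add hC, L_Bxx hC, L_Tyxx hC]
      have e2 : assocB C (ee j) ((ee i + ee k) + ee j)
          = assocB C (ee j) (ee i + ee k) + 3 * C (ee j) := by
        rw [L_B2add hC, L_Bxx hC]
      have e3 : assocB C (ee i + ee k) (ee j)
          = assocB C (ee i) (ee j) + assocB C (ee k) (ee j) + assocT C (ee i) (ee k) (ee j) :=
        L_B1add hC (ee j) (ee i) (ee k)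
      have e4 : assocB C (ee j) (ee i + ee k) = assocB C (ee j) (ee i) + assocB C (ee j) (ee k) :=
        L_B2add hC (ee j) (ee i) (ee k)
      rw [e3, e4, cond1 j, cond2 j i (Ne.symm hij), cond2 j k (Ne.symm hkj)] at h0
      rw [e1, e2, e3, e4, cond1 j, cond2 j i (Ne.symm hij), cond2 j k (Ne.symm hkj)] at h1
      refine mul_left_cancel₀ (a := (2:ℤ)) (by norm_num) ?_
      linear_combination h1 - h0
    refine ⟨cond1, cond2, ?_⟩
    intro i j k hij hjk hik
    have hT : assocT C (ee i) (ee j) (ee k) = 0 := by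
      rcases htri i j k hij hjk hik with h | h | h
      · have hji : p j i = 0 := (hp3 i j hij).mp h
        have hBji : assocB C (ee j) (ee i) = 0 := by
          rw [cond2 i j hij, hji, zero_mul]
        rw [L_Tsym2 hC, R i k j hik hij (Ne.symm hjk), h, hBji]
        ring
      · have hkj : p k j = 0 := (hp3 j k hjk).mp h
        have hBjk : assocB C (ee j) (ee k) = 0 := by
          rw [cond2 k j (Ne.symm hjk), h, zero_mul]
        rw [L_Tsym2 hC, R i k j hik hij (Ne.symm hjk), hkj, hBjk]
        ring
      · have hki : p k i = 0 := (hp3 i k hik).mp h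
        have hBki : assocB C (ee k) (ee i) = 0 := by
          rw [cond2 i k hik, hki, zero_mul]
        rw [R i j k hij hik hjk, h, hBki]
        ring
    refine ⟨hT, ?_⟩
    rcases htri i j k hij hjk hik with h | h | h
    · have hji : p j i = 0 := (hp3 i j hij).mp h
      have hBij : assocB C (ee i) (ee j) = 0 := by
        rw [cond2 j i (Ne.symm hij), h, zero_mul]
      rw [hji, hBij]
      ring
    · have hperm : assocT C (ee j) (ee k) (ee i) = assocT C (ee i) (ee j) (ee k) := by
        rw [L_Tsym2 hC, L_Tsym1 hC]
      have hR := R j k i hjk (Ne.symm hij) (Ne.symm hik)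
      rw [hperm, hT] at hR
      linarith
    · have hki : p k i = 0 := (hp3 i k hik).mp h
      have hBik : assocB C (ee i) (ee k) = 0 := by
        rw [cond2 k i (Ne.symm hik), h, zero_mul]
      rw [hki, hBik]
      ring
  · -- the conditions imply invariance
    rintro ⟨c1, c2, c3⟩ j y
    have c2' : ∀ i j : Fin n, assocB C (ee i) (ee j) = p i j * assocB C (ee j) (ee i) := by
      intro i j
      by_cases h : i = j
      · subst h
        rw [L_Bxx hC, c1, hp1]
        ring
      · exact c2 j i (Ne.symm h)
    have BT : ∀ l i : Fin n, assocT C (ee l) (ee i) (ee j)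
        = p l j * assocB C (ee j) (ee i) + p i j * assocB C (ee j) (ee l) := by
      intro l i
      by_cases hlj : l = j
      · subst hlj
        rw [L_Tsym1 hC, L_Tyxx hC, hp1, L_Bxx hC, c1]
        ring
      · by_cases hij : i = j
        · subst hij
          rw [L_Tyxx hC, L_Bxx hC, c1, hp1]
          ring
        · by_cases hli : l = i
          · subst hli
            rw [L_Tsym2 hC, L_Tsym1 hC, L_Tyxx hC, c2' l j]
            ring
          · obtain ⟨hT0, hS0⟩ := c3 j l i (fun hh => hlj hh.symm) hli (fun hh => hij hh.symm)
            rw [L_Tsym2 hC, L_Tsym1 hC, hT0]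
            linarith
    have key : ∀ s : Finset (Fin n),
        assocB C (∑ l ∈ s, Pi.single l (y l)) (ee j)
          = (∑ l ∈ s, y l * p l j) * assocB C (ee j) (∑ l ∈ s, Pi.single l (y l))
        ∧ ∀ i : Fin n, assocT C (∑ l ∈ s, Pi.single l (y l)) (ee i) (ee j)
          = (∑ l ∈ s, y l * p l j) * assocB C (ee j) (ee i)
            + p i j * assocB C (ee j) (∑ l ∈ s, Pi.single l (y l)) := by
      intro s
      induction s using Finset.induction_on with
      | empty =>
        simp only [Finset.sum_empty]
        refine ⟨by rw [L_B1zero hC, L_B2zero hC]; ring, fun i => ?_⟩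
        rw [L_T1zero hC, L_B2zero hC]
        ring
      | @insert a s ha ih =>
        rw [Finset.sum_insert ha, Finset.sum_insert ha]
        set z := ∑ l ∈ s, Pi.single l (y l) with hz
        constructor
        · rw [L_B1add hC, single_eq_smul, L_B1smul hC, L_T1smul hC, L_Tsym1 hC,
            ih.2 a, ih.1, L_B2add hC, L_B2smul hC, c2' a j]
          ring
        · intro i
          rw [L_T1add hC, single_eq_smul, L_T1smul hC, BT a i, ih.2 i,
            L_B2add hC, L_B2smul hC]
          ring
    have star : assocB C y (ee j) = (∑ i, y i * p i j) * assocB C (ee j) y := by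
      have h := (key Finset.univ).1
      rwa [Finset.univ_sum_single y] at h
    rw [hrepr j y, L_M2 hC, star, c1 j]
    ring
end

section
/- Let D₁, …, D_n : Y × Y → ℤ be antisymmetric ℤ-bilinear forms satisfying the closedness condition D_i(e_j, y) + D_j(e_i, y) − p(i,j)·D_j(e_j, y) = 0 for all indices i, j and all y ∈ Y. Then the ℤ-trilinear form D : Y × Y × Y → ℤ determined by D(e_i, y, z) = D_i(y, z) is totally antisymmetric (alternating). (Vanishing of the cohomology group E₁^{−3,4}.) -/
/-- Let `D₁, …, Dₙ` be antisymmetric `ℤ`-bilinear forms on `Y = ℤⁿ` satisfying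
`Dᵢ(eⱼ, y) + Dⱼ(eᵢ, y) − p i j · Dⱼ(eⱼ, y) = 0` for all `i, j, y`. Then the trilinear form `D`
determined by `D(eᵢ, y, z) = Dᵢ(y, z)`, i.e. `D(x, y, z) = ∑ i, x i · Dᵢ(y, z)`, is totally
antisymmetric (alternating). -/
theorem closed_antisymmetric_forms_alternating {n : ℕ} (p : Fin n → Fin n → ℤ)
    (hp : IsGCM p)
    (D : Fin n → ((Fin n → ℤ) →ₗ[ℤ] (Fin n → ℤ) →ₗ[ℤ] ℤ))
    (hanti : ∀ (i : Fin n) (y z : Fin n → ℤ), D i y z = -D i z y)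
    (hclosed : ∀ (i j : Fin n) (y : Fin n → ℤ),
      D i (Pi.single j 1) y + D j (Pi.single i 1) y - p i j * D j (Pi.single j 1) y = 0) :
    ∀ x y z : Fin n → ℤ,
      (∑ i, x i * D i y z) = -(∑ i, y i * D i x z) ∧
      (∑ i, x i * D i y z) = -(∑ i, x i * D i z y) := by
  have hzero : ∀ (i : Fin n) (y : Fin n → ℤ), D i y y = 0 := by
    intro i y; have := hanti i y y; omega
  have expand : ∀ (i : Fin n) (y z : Fin n → ℤ),
      D i y z = ∑ j, y j * D i (Pi.single j 1) z := by
    intro i y z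
    conv_lhs => rw [← Finset.univ_sum_single y]
    rw [map_sum, LinearMap.sum_apply]
    refine Finset.sum_congr rfl fun j _ => ?_
    have h : Pi.single j (y j) = y j • (Pi.single j 1 : Fin n → ℤ) := by
      rw [← Pi.single_smul, smul_eq_mul, mul_one]
    rw [h, map_smul, LinearMap.smul_apply, smul_eq_mul]
  have h1 : ∀ (j k : Fin n), D j (Pi.single j 1) (Pi.single k 1) = 0 := by
    intro j k
    have h := hclosed k j (Pi.single j 1)
    rw [hzero, hzero] at h
    have h' : D j (Pi.single k 1) (Pi.single j 1) = 0 := by linarith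
    have := hanti j (Pi.single j 1) (Pi.single k 1)
    rw [h'] at this
    simpa using this
  have h2 : ∀ (j : Fin n) (y : Fin n → ℤ), D j (Pi.single j 1) y = 0 := by
    intro j y
    have := hanti j (Pi.single j 1) y
    rw [expand j y (Pi.single j 1)] at this
    have hs : (∑ k, y k * D j (Pi.single k 1) (Pi.single j 1)) = 0 := by
      refine Finset.sum_eq_zero fun k _ => ?_
      have := hanti j (Pi.single k 1) (Pi.single j 1)
      rw [h1 j k] at this
      simp [this]
    rw [hs] at this
    simpa using this
  have h3 : ∀ (i j : Fin n) (y : Fin n → ℤ),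
      D i (Pi.single j 1) y = -(D j (Pi.single i 1) y) := by
    intro i j y
    have h := hclosed i j y
    rw [h2 j y] at h
    linarith
  intro x y z
  constructor
  · calc (∑ i, x i * D i y z)
        = ∑ i, ∑ j, x i * (y j * D i (Pi.single j 1) z) := by
          refine Finset.sum_congr rfl fun i _ => ?_
          rw [expand i y z, Finset.mul_sum]
      _ = ∑ j, ∑ i, x i * (y j * D i (Pi.single j 1) z) := Finset.sum_comm
      _ = ∑ j, ∑ i, -(y j * (x i * D j (Pi.single i 1) z)) := by
          refine Finset.sum_congr rfl fun j _ => Finset.sum_congr rfl fun i _ => ?_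
          rw [h3 i j z]; ring
      _ = -(∑ j, y j * D j x z) := by
          rw [← Finset.sum_neg_distrib]
          refine Finset.sum_congr rfl fun j _ => ?_
          rw [expand j x z, Finset.mul_sum, ← Finset.sum_neg_distrib]
  · rw [← Finset.sum_neg_distrib]
    refine Finset.sum_congr rfl fun i _ => ?_
    rw [hanti i y z]; ring
end

section
/- If the family φ = (φ_{ij})_{i≠j} is exact, then B_φ(i, j) = 0 for all i ≠ j. -/
/-- A family `φ = (φᵢⱼ)` of linear forms on `Y = ℤⁿ` with `φᵢⱼ = φⱼᵢ` whenever `p i j = 0`. -/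
def IsPhiFamily {n : ℕ} (p : Fin n → Fin n → ℤ)
    (φ : Fin n → Fin n → ((Fin n → ℤ) →ₗ[ℤ] ℤ)) : Prop :=
  ∀ i j : Fin n, i ≠ j → p i j = 0 → φ i j = φ j i

/-- The family `φ` is exact: `φᵢⱼ(y) = Dᵢ(eⱼ, y) + Dⱼ(eᵢ, y) − p i j · Dⱼ(eⱼ, y)` for some
antisymmetric `ℤ`-bilinear forms `Dᵢ`. -/
def PhiExact {n : ℕ} (p : Fin n → Fin n → ℤ)
    (φ : Fin n → Fin n → ((Fin n → ℤ) →ₗ[ℤ] ℤ)) : Prop :=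
  ∃ D : Fin n → ((Fin n → ℤ) →ₗ[ℤ] (Fin n → ℤ) →ₗ[ℤ] ℤ),
    (∀ (i : Fin n) (y z : Fin n → ℤ), D i y z = -D i z y) ∧
    ∀ i j : Fin n, i ≠ j → ∀ y : Fin n → ℤ,
      φ i j y = D i (Pi.single j 1) y + D j (Pi.single i 1) y - p i j * D j (Pi.single j 1) y

/-- The family `φ` is closed. -/
def PhiClosed {n : ℕ} (p : Fin n → Fin n → ℤ)
    (φ : Fin n → Fin n → ((Fin n → ℤ) →ₗ[ℤ] ℤ)) : Prop :=
  (∀ i j k : Fin n, i ≠ j → j ≠ k → i ≠ k →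
    0 = φ i j (Pi.single k 1) + φ i k (Pi.single j 1) + φ j k (Pi.single i 1)
      - p j k * φ i k (Pi.single k 1) - p i j * φ j k (Pi.single j 1)
      + (p j k * p i j - p i k) * φ j k (Pi.single k 1)) ∧
  (∀ i j : Fin n, i ≠ j → p i j ≠ 0 →
    0 = φ i j (Pi.single i 1) - p i j * φ j i (Pi.single j 1)
      + (p j i * p i j - 1) * φ j i (Pi.single i 1))

/-- `B_φ(i, j) = φᵢⱼ(eᵢ) − φⱼᵢ(eᵢ) − p i j · φᵢⱼ(eⱼ)`. -/
def Bphi {n : ℕ} (p : Fin n → Fin n → ℤ)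
    (φ : Fin n → Fin n → ((Fin n → ℤ) →ₗ[ℤ] ℤ)) (i j : Fin n) : ℤ :=
  φ i j (Pi.single i 1) - φ j i (Pi.single i 1) - p i j * φ i j (Pi.single j 1)

/-- If the family `φ = (φᵢⱼ)` is exact, then `B_φ(i, j) = 0` for all `i ≠ j`. -/
theorem Bphi_eq_zero_of_exact {n : ℕ} (p : Fin n → Fin n → ℤ) (hp : IsGCM p)
    (φ : Fin n → Fin n → ((Fin n → ℤ) →ₗ[ℤ] ℤ)) (hφ : IsPhiFamily p φ)
    (hexact : PhiExact p φ) :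
    ∀ i j : Fin n, i ≠ j → Bphi p φ i j = 0 := by
  obtain ⟨D, hanti, hD⟩ := hexact
  intro i j hij
  have hzero : ∀ k (x : Fin n → ℤ), D k x x = 0 := fun k x => by
    have := hanti k x x; omega
  unfold Bphi
  rw [hD i j hij, hD j i hij.symm, hD i j hij]
  simp only [hzero, hanti j (Pi.single j 1) (Pi.single i 1)]
  ring
end

section
/- Assume that among any three pairwise distinct indices at least one pair satisfies p = 0 (no triangles in the Dynkin diagram). If the family φ = (φ_{ij})_{i≠j} is closed, then B_φ satisfies the Weyl-invariance relations: B_φ(j, i) = p(j,i)·B_φ(i, j) for all i ≠ j, and p(j,i)·B_φ(i, k) + p(k,i)·B_φ(i, j) = 0 for all pairwise distinct i, j, k. -/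
/-- Assume the Dynkin diagram has no triangles. If the family `φ = (φᵢⱼ)` is
closed, then `B_φ` satisfies the Weyl-invariance relations `B_φ(j, i) = p j i · B_φ(i, j)` for
`i ≠ j`, and `p j i · B_φ(i, k) + p k i · B_φ(i, j) = 0` for pairwise distinct `i, j, k`. -/
theorem Bphi_weyl_invariance_of_closed {n : ℕ} (p : Fin n → Fin n → ℤ) (hp : IsGCM p)
    (htri : ∀ i j k : Fin n, i ≠ j → j ≠ k → i ≠ k → p i j = 0 ∨ p j k = 0 ∨ p i k = 0)
    (φ : Fin n → Fin n → ((Fin n → ℤ) →ₗ[ℤ] ℤ)) (hφ : IsPhiFamily p φ)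
    (hclosed : PhiClosed p φ) :
    (∀ i j : Fin n, i ≠ j → Bphi p φ j i = p j i * Bphi p φ i j) ∧
    (∀ i j k : Fin n, i ≠ j → j ≠ k → i ≠ k →
      p j i * Bphi p φ i k + p k i * Bphi p φ i j = 0) := by
  obtain ⟨hdiag, hneg, hsymm0⟩ := hp
  obtain ⟨hc1, hc2⟩ := hclosed
  have hB0 : ∀ i j : Fin n, i ≠ j → p i j = 0 → Bphi p φ i j = 0 := by
    intro i j hij h0
    have h := hφ i j hij h0
    simp [Bphi, h, h0]
  constructor
  · intro i j hij
    by_cases h0 : p i j = 0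
    · have h0' : p j i = 0 := (hsymm0 i j hij).mp h0
      rw [hB0 j i hij.symm h0', hB0 i j hij h0, mul_zero]
    · have h0' : p j i ≠ 0 := fun h => h0 ((hsymm0 i j hij).mpr h)
      have h := hc2 j i hij.symm h0'
      simp only [Bphi]
      linear_combination -h
  · intro i j k hij hjk hik
    rcases htri i j k hij hjk hik with h0 | h0 | h0
    · have hji : p j i = 0 := (hsymm0 i j hij).mp h0
      rw [hji, hB0 i j hij h0]; ring
    · have hkj : p k j = 0 := (hsymm0 j k hjk).mp h0
      have hψ := hφ j k hjk h0
      have h1 := hc1 i j k hij hjk hik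
      have h2 := hc1 j i k hij.symm hik hjk
      have h3 := hc1 k j i hjk.symm hij.symm hik.symm
      have h4 := hc1 k i j hik.symm hij hjk.symm
      simp only [h0, hkj, hψ] at h1 h2 h3 h4
      simp only [Bphi]
      linear_combination -h1 + h2 - h3 + h4
    · have hki : p k i = 0 := (hsymm0 i k hik).mp h0
      rw [hki, hB0 i k hik h0]; ring
end

section
/- Assume that among any three pairwise distinct indices at least one pair satisfies p = 0 (no triangles in the Dynkin diagram). If the family φ = (φ_{ij})_{i≠j} is closed and B_φ(i, j) = 0 for all i ≠ j, then φ is exact. -/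
namespace Stmt12

variable {n : ℕ} (p : Fin n → Fin n → ℤ) (φ : Fin n → Fin n → ((Fin n → ℤ) →ₗ[ℤ] ℤ))

/-- `G u v w = φᵤᵥ(e_w) − p u v · φ_{w v}(e_v)`. -/
def Gaux (u v w : Fin n) : ℤ :=
  φ u v (Pi.single w 1) - p u v * φ w v (Pi.single v 1)

/-- The entries of the antisymmetric matrices `Dᵢ`. -/
def daux (a b c : Fin n) : ℤ :=
  if b = c then 0
  else if a = b then -(φ c a (Pi.single a 1))
  else if a = c then φ b a (Pi.single a 1)
  else if b < a ∧ c < a then 0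
  else if a < b ∧ a < c then
    (if b < c then Gaux p φ a b c + Gaux p φ b c a else -(Gaux p φ a c b + Gaux p φ c b a))
  else (if c < b then Gaux p φ a b c else -(Gaux p φ a c b))

lemma daux_bb (a c : Fin n) (h : a ≠ c) : daux p φ a a c = -(φ c a (Pi.single a 1)) := by
  unfold daux; rw [if_neg h, if_pos rfl]

lemma daux_cc (a b : Fin n) (h : b ≠ a) : daux p φ a b a = φ b a (Pi.single a 1) := by
  unfold daux; rw [if_neg h, if_neg (Ne.symm h), if_pos rfl]

lemma daux_eq (a b : Fin n) : daux p φ a b b = 0 := by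
  unfold daux; rw [if_pos rfl]

lemma daux_max (a b c : Fin n) (h1 : b < a) (h2 : c < a) (hbc : b ≠ c) :
    daux p φ a b c = 0 := by
  unfold daux
  rw [if_neg hbc, if_neg (by omega : ¬ a = b), if_neg (by omega : ¬ a = c), if_pos ⟨h1, h2⟩]

lemma daux_mid_hi (a b c : Fin n) (h1 : c < a) (h2 : a < b) :
    daux p φ a b c = Gaux p φ a b c := by
  unfold daux
  rw [if_neg (by omega : ¬ b = c), if_neg (by omega : ¬ a = b), if_neg (by omega : ¬ a = c),
    if_neg (by omega : ¬ (b < a ∧ c < a)), if_neg (by omega : ¬ (a < b ∧ a < c)),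
    if_pos (by omega : c < b)]

lemma daux_mid_lo (a b c : Fin n) (h1 : b < a) (h2 : a < c) :
    daux p φ a b c = -Gaux p φ a c b := by
  unfold daux
  rw [if_neg (by omega : ¬ b = c), if_neg (by omega : ¬ a = b), if_neg (by omega : ¬ a = c),
    if_neg (by omega : ¬ (b < a ∧ c < a)), if_neg (by omega : ¬ (a < b ∧ a < c)),
    if_neg (by omega : ¬ c < b)]

lemma daux_min_lt (a b c : Fin n) (h1 : a < b) (h2 : b < c) :
    daux p φ a b c = Gaux p φ a b c + Gaux p φ b c a := by
  unfold daux
  rw [if_neg (by omega : ¬ b = c), if_neg (by omega : ¬ a = b), if_neg (by omega : ¬ a = c),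
    if_neg (by omega : ¬ (b < a ∧ c < a)), if_pos (⟨h1, by omega⟩ : a < b ∧ a < c), if_pos h2]

lemma daux_min_gt (a b c : Fin n) (h1 : a < c) (h2 : c < b) :
    daux p φ a b c = -(Gaux p φ a c b + Gaux p φ c b a) := by
  unfold daux
  rw [if_neg (by omega : ¬ b = c), if_neg (by omega : ¬ a = b), if_neg (by omega : ¬ a = c),
    if_neg (by omega : ¬ (b < a ∧ c < a)), if_pos (⟨by omega, h1⟩ : a < b ∧ a < c),
    if_neg (by omega : ¬ b < c)]

lemma daux_anti (a b c : Fin n) : daux p φ a b c = -daux p φ a c b := by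
  rcases eq_or_ne b c with rfl | hbc
  · rw [daux_eq]; ring
  rcases eq_or_ne a b with rfl | hab
  · rw [daux_bb _ _ _ _ hbc, daux_cc _ _ _ _ (Ne.symm hbc)]
  rcases eq_or_ne a c with rfl | hac
  · rw [daux_cc _ _ _ _ (Ne.symm hab), daux_bb _ _ _ _ hab]; ring
  rcases lt_trichotomy a b with h1 | h1 | h1
  · rcases lt_trichotomy a c with h2 | h2 | h2
    · rcases lt_trichotomy b c with h3 | h3 | h3
      · rw [daux_min_lt _ _ _ _ _ h1 h3, daux_min_gt _ _ _ _ _ h1 h3]; ring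
      · exact absurd h3 hbc
      · rw [daux_min_gt _ _ _ _ _ h2 h3, daux_min_lt _ _ _ _ _ h2 h3]
    · exact absurd h2 hac
    · rw [daux_mid_hi _ _ _ _ _ h2 h1, daux_mid_lo _ _ _ _ _ h2 h1]; ring
  · exact absurd h1 hab
  · rcases lt_trichotomy a c with h2 | h2 | h2
    · rw [daux_mid_lo _ _ _ _ _ h1 h2, daux_mid_hi _ _ _ _ _ h1 h2]
    · exact absurd h2 hac
    · rw [daux_max _ _ _ _ _ h1 h2 hbc, daux_max _ _ _ _ _ h2 h1 (Ne.symm hbc)]; ring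

variable {p φ}
variable (hp : IsGCM p) (hφ : IsPhiFamily p φ) (hclosed : PhiClosed p φ)
  (hB : ∀ i j : Fin n, i ≠ j → Bphi p φ i j = 0)
  (htri : ∀ i j k : Fin n, i ≠ j → j ≠ k → i ≠ k → p i j = 0 ∨ p j k = 0 ∨ p i k = 0)

section lemmas
include hp hφ hclosed hB

lemma Gsum_of (i j k : Fin n) (hij : i ≠ j) (hjk : j ≠ k) (hik : i ≠ k) (h0 : p i k = 0) :
    Gaux p φ i j k + Gaux p φ j k i + Gaux p φ k i j = 0 := by
  have hki : p k i = 0 := (hp.2.2 i k hik).1 h0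
  have hfik : φ i k = φ k i := hφ i k hik h0
  have hC := hclosed.1 i j k hij hjk hik
  have hBjk := hB j k hjk
  unfold Bphi at hBjk
  unfold Gaux
  simp only [hfik, h0, hki] at hC ⊢
  linear_combination -hC + p i j * hBjk

include htri

lemma Gsum (i j k : Fin n) (hij : i ≠ j) (hjk : j ≠ k) (hik : i ≠ k) :
    Gaux p φ i j k + Gaux p φ j k i + Gaux p φ k i j = 0 := by
  rcases htri i j k hij hjk hik with h | h | h
  · have := Gsum_of hp hφ hclosed hB j k i hjk (Ne.symm hik) (Ne.symm hij)
      ((hp.2.2 i j hij).1 h)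
    linarith
  · have := Gsum_of hp hφ hclosed hB k i j (Ne.symm hik) hij (Ne.symm hjk)
      ((hp.2.2 j k hjk).1 h)
    linarith
  · exact Gsum_of hp hφ hclosed hB i j k hij hjk hik h

omit htri

lemma Gsym_of (i j k : Fin n) (hij : i ≠ j) (hjk : j ≠ k) (hik : i ≠ k) (h0 : p j k = 0) :
    Gaux p φ i j k = Gaux p φ j i k := by
  have hkj : p k j = 0 := (hp.2.2 j k hjk).1 h0
  have hfjk : φ j k = φ k j := hφ j k hjk h0
  have hC1 := hclosed.1 i j k hij hjk hik
  have hC2 := hclosed.1 j i k (Ne.symm hij) hik hjk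
  have hBik := hB i k hik
  unfold Bphi at hBik
  unfold Gaux
  simp only [hfjk, h0, hkj] at hC1 hC2 ⊢
  linear_combination -hC1 + hC2 - p j i * hBik

include htri

lemma Gsym (i j k : Fin n) (hij : i ≠ j) (hjk : j ≠ k) (hik : i ≠ k) :
    Gaux p φ i j k = Gaux p φ j i k := by
  by_cases h : p i j = 0
  · have hji : p j i = 0 := (hp.2.2 i j hij).1 h
    have hfij : φ i j = φ j i := hφ i j hij h
    unfold Gaux
    rw [hfij, h, hji]
    ring
  · rcases htri i j k hij hjk hik with h' | h' | h'
    · exact absurd h' h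
    · exact Gsym_of hp hφ hclosed hB i j k hij hjk hik h'
    · exact (Gsym_of hp hφ hclosed hB j i k (Ne.symm hij) hik hjk h').symm

/-- The key identity on pairwise-distinct basis indices. -/
lemma dkey (i j k : Fin n) (hij : i ≠ j) (hjk : j ≠ k) (hik : i ≠ k) :
    daux p φ i j k + daux p φ j i k = Gaux p φ i j k := by
  rcases lt_trichotomy i j with h1 | h1 | h1
  · rcases lt_trichotomy j k with h2 | h2 | h2
    · -- i < j < k
      rw [daux_min_lt _ _ _ _ _ h1 h2, daux_mid_lo _ _ _ _ _ h1 h2]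
      ring
    · exact absurd h2 hjk
    · rcases lt_trichotomy i k with h3 | h3 | h3
      · -- i < k < j
        rw [daux_min_gt _ _ _ _ _ h3 h2, daux_max _ _ _ _ _ h1 h2 hik]
        have e1 := Gsum hp hφ hclosed hB htri i k j hik (Ne.symm hjk) hij
        have e2 := Gsym hp hφ hclosed hB htri i j k hij hjk hik
        linarith
      · exact absurd h3 hik
      · -- k < i < j
        rw [daux_mid_hi _ _ _ _ _ h3 h1, daux_max _ _ _ _ _ h1 h2 hik]
        ring
  · exact absurd h1 hij
  · rcases lt_trichotomy i k with h2 | h2 | h2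
    · -- j < i < k
      rw [daux_mid_lo _ _ _ _ _ h1 h2, daux_min_lt _ _ _ _ _ h1 h2]
      have e2 := Gsym hp hφ hclosed hB htri i j k hij hjk hik
      linarith
    · exact absurd h2 hik
    · rcases lt_trichotomy j k with h3 | h3 | h3
      · -- j < k < i
        rw [daux_max _ _ _ _ _ h1 h2 hjk, daux_min_gt _ _ _ _ _ h3 h2]
        have e1 := Gsum hp hφ hclosed hB htri i j k hij hjk hik
        linarith
      · exact absurd h3 hjk
      · -- k < j < i
        rw [daux_max _ _ _ _ _ h1 h2 hjk, daux_mid_hi _ _ _ _ _ h3 h1]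
        have e2 := Gsym hp hφ hclosed hB htri i j k hij hjk hik
        linarith

end lemmas

end Stmt12

/-- Assume the Dynkin diagram has no triangles. If the family `φ = (φᵢⱼ)` is
closed and `B_φ(i, j) = 0` for all `i ≠ j`, then `φ` is exact. -/
theorem exact_of_closed_of_Bphi_eq_zero {n : ℕ} (p : Fin n → Fin n → ℤ) (hp : IsGCM p)
    (htri : ∀ i j k : Fin n, i ≠ j → j ≠ k → i ≠ k → p i j = 0 ∨ p j k = 0 ∨ p i k = 0)
    (φ : Fin n → Fin n → ((Fin n → ℤ) →ₗ[ℤ] ℤ)) (hφ : IsPhiFamily p φ)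
    (hclosed : PhiClosed p φ) (hB : ∀ i j : Fin n, i ≠ j → Bphi p φ i j = 0) :
    PhiExact p φ := by
  classical
  let D : Fin n → ((Fin n → ℤ) →ₗ[ℤ] (Fin n → ℤ) →ₗ[ℤ] ℤ) :=
    fun i => Matrix.toLinearMap₂' ℤ (Matrix.of (Stmt12.daux p φ i))
  have hDval : ∀ a b c : Fin n, D a (Pi.single b 1) (Pi.single c 1) = Stmt12.daux p φ a b c := by
    intro a b c
    show Matrix.toLinearMap₂' ℤ (Matrix.of (Stmt12.daux p φ a)) (Pi.single b 1) (Pi.single c 1)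
      = Stmt12.daux p φ a b c
    rw [Matrix.toLinearMap₂'_apply]
    simp [Pi.single_apply]
  refine ⟨D, ?_, ?_⟩
  · intro i y z
    show Matrix.toLinearMap₂' ℤ (Matrix.of (Stmt12.daux p φ i)) y z
      = -Matrix.toLinearMap₂' ℤ (Matrix.of (Stmt12.daux p φ i)) z y
    simp only [Matrix.toLinearMap₂'_apply, smul_eq_mul, ← Finset.sum_neg_distrib]
    rw [Finset.sum_comm]
    refine Finset.sum_congr rfl fun a _ => Finset.sum_congr rfl fun b _ => ?_
    rw [Matrix.of_apply, Matrix.of_apply, Stmt12.daux_anti]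
    ring
  · intro i j hij y
    have key : ∀ k, φ i j (Pi.single k 1)
        = Stmt12.daux p φ i j k + Stmt12.daux p φ j i k - p i j * Stmt12.daux p φ j j k := by
      intro k
      by_cases hkj : k = j
      · subst hkj
        rw [Stmt12.daux_eq, Stmt12.daux_cc _ _ _ _ hij, Stmt12.daux_eq]
        ring
      by_cases hki : k = i
      · subst hki
        rw [Stmt12.daux_cc _ _ _ _ (Ne.symm hij), Stmt12.daux_eq,
          Stmt12.daux_bb _ _ _ _ (Ne.symm hij)]
        have hBij := hB _ _ hij
        unfold Bphi at hBij
        linarith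
      · rw [Stmt12.daux_bb _ _ _ _ (Ne.symm hkj)]
        have hd := Stmt12.dkey hp hφ hclosed hB htri i j k hij (Ne.symm hkj) (Ne.symm hki)
        unfold Stmt12.Gaux at hd
        linarith
    have heq : φ i j = D i (Pi.single j 1) + D j (Pi.single i 1)
        - (p i j) • (D j (Pi.single j 1)) := by
      apply (Pi.basisFun ℤ (Fin n)).ext
      intro k
      rw [Pi.basisFun_apply]
      simp only [LinearMap.sub_apply, LinearMap.add_apply, LinearMap.smul_apply, smul_eq_mul,
        hDval]
      exact key k
    rw [heq]
    simp only [LinearMap.sub_apply, LinearMap.add_apply, LinearMap.smul_apply, smul_eq_mul]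
end

section
/- Let n = 2 and let p be the Cartan matrix of type G₂: p(1,1) = p(2,2) = 2, p(1,2) = −3, p(2,1) = −1. Then a pair of integers (d₁₂₁, d₂₁₂) is exact — i.e. there exist linear forms φ₁₂, φ₂₁ : ℤ² → ℤ with d₁₂₁ = φ₁₂(e₁) + 2φ₂₁(e₁) + 3φ₂₁(e₂) and d₂₁₂ = φ₂₁(e₂) + 2φ₁₂(e₂) + φ₁₂(e₁) — if and only if d₁₂₁ − d₂₁₂ is even. Consequently the quotient of all pairs by the exact ones is isomorphic to ℤ/2ℤ (this computes CH³(G₂) ≅ ℤ/2ℤ). -/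
/-- A pair of integers `(d₁₂₁, d₂₁₂)` is exact for the `G₂` Cartan matrix
(`p(1,1) = p(2,2) = 2`, `p(1,2) = −3`, `p(2,1) = −1`): there are linear forms
`φ₁₂, φ₂₁ : ℤ² → ℤ` with `d₁₂₁ = φ₁₂(e₁) + 2φ₂₁(e₁) + 3φ₂₁(e₂)` and
`d₂₁₂ = φ₂₁(e₂) + 2φ₁₂(e₂) + φ₁₂(e₁)`. -/
def G2Exact (d : ℤ × ℤ) : Prop :=
  ∃ φ₁₂ φ₂₁ : (Fin 2 → ℤ) →ₗ[ℤ] ℤ,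
    d.1 = φ₁₂ (Pi.single 0 1) + 2 * φ₂₁ (Pi.single 0 1) + 3 * φ₂₁ (Pi.single 1 1) ∧
    d.2 = φ₂₁ (Pi.single 1 1) + 2 * φ₁₂ (Pi.single 1 1) + φ₁₂ (Pi.single 0 1)

/-- The linear form on `ℤ²` with values `a`, `b` on the standard basis. -/
def lform (a b : ℤ) : (Fin 2 → ℤ) →ₗ[ℤ] ℤ :=
  a • LinearMap.proj 0 + b • LinearMap.proj 1

lemma lform_e0 (a b : ℤ) : lform a b (Pi.single 0 1) = a := by
  simp [lform]

lemma lform_e1 (a b : ℤ) : lform a b (Pi.single 1 1) = b := by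
  simp [lform]

lemma g2exact_iff (d : ℤ × ℤ) : G2Exact d ↔ 2 ∣ (d.1 - d.2) := by
  constructor
  · rintro ⟨φ₁₂, φ₂₁, h1, h2⟩
    refine ⟨φ₂₁ (Pi.single 0 1) + φ₂₁ (Pi.single 1 1) - φ₁₂ (Pi.single 1 1), ?_⟩
    rw [h1, h2]; ring
  · rintro ⟨k, hk⟩
    refine ⟨lform d.1 (-k), lform 0 0, ?_, ?_⟩ <;>
      simp [lform_e0, lform_e1] <;> omega

/-- For the `G₂` Cartan matrix, a pair `(d₁₂₁, d₂₁₂)` is exact iff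
`d₁₂₁ − d₂₁₂` is even; consequently the quotient of all pairs by the exact ones is isomorphic
to `ℤ/2ℤ` (there is a surjective homomorphism `ℤ × ℤ →+ ZMod 2` whose kernel is exactly the set
of exact pairs). This computes `CH³(G₂) ≅ ℤ/2ℤ`. -/
theorem g2_exact_iff_even_and_quotient_zmod2 :
    (∀ d : ℤ × ℤ, G2Exact d ↔ 2 ∣ (d.1 - d.2)) ∧
    (∃ f : ℤ × ℤ →+ ZMod 2, Function.Surjective f ∧ ∀ d : ℤ × ℤ, f d = 0 ↔ G2Exact d) := by
  refine ⟨g2exact_iff, ?_⟩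
  refine ⟨AddMonoidHom.mk' (fun d => (d.1 : ZMod 2) - (d.2 : ZMod 2)) (by intro a b; simp [Prod.fst_add, Prod.snd_add]; push_cast; ring), ?_, ?_⟩
  · intro x
    exact ⟨((x.val : ℤ), 0), by simp [ZMod.intCast_zmod_cast]⟩
  · intro d
    rw [g2exact_iff]
    simp only [AddMonoidHom.mk'_apply, sub_eq_zero]
    rw [← sub_eq_zero, ← Int.cast_sub, ZMod.intCast_zmod_eq_zero_iff_dvd]
    norm_num
end

section
/- Let n = 3 and let p be the Cartan matrix of type B₃ ordered starting from the short root: p(i,i) = 2, p(1,2) = −2, p(2,1) = −1, p(2,3) = p(3,2) = −1, p(1,3) = p(3,1) = 0. Then a closed family d = (d_{ijk}) is exact if and only if d₃₂₁ + d₁₂₃ − d₁₂₁ + d₂₁₂ − d₃₁₂ − d₂₁₃ is even. (This computes CH³(Spin₇) ≅ ℤ/2ℤ.) -/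
/-- The index triples `(i, j, k)` with `i ≠ j`, `j ≠ k`, and (`i ≠ k` or `p i j ≠ 0`). -/
def ValidTriple {n : ℕ} (p : Fin n → Fin n → ℤ) (i j k : Fin n) : Prop :=
  i ≠ j ∧ j ≠ k ∧ (i ≠ k ∨ p i j ≠ 0)

/-- A family `d = (dᵢⱼₖ)` of integers (indexed by valid triples) is closed if
`dᵢⱼₖ = dⱼᵢₖ` whenever `p i j = 0`, `dᵢⱼₖ = dᵢₖⱼ` whenever `p j k = 0`, and
`dᵢⱼᵢ = dⱼᵢⱼ` whenever `p i j = p j i = −1`. -/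
def DClosed {n : ℕ} (p : Fin n → Fin n → ℤ) (d : Fin n → Fin n → Fin n → ℤ) : Prop :=
  (∀ i j k, ValidTriple p i j k → p i j = 0 → d i j k = d j i k) ∧
  (∀ i j k, ValidTriple p i j k → p j k = 0 → d i j k = d i k j) ∧
  (∀ i j, i ≠ j → p i j = -1 → p j i = -1 → d i j i = d j i j)

/-- A family `d = (dᵢⱼₖ)` is exact if there are linear forms `φᵢⱼ : Y → ℤ` for `i ≠ j`, with
`φᵢᵢ = 0` and `φᵢⱼ = φⱼᵢ` whenever `p i j = 0`, such that
`dᵢⱼₖ = φᵢⱼ(eₖ) + φᵢₖ(eⱼ − p j k·eₖ) + φⱼₖ(eᵢ − p i j·eⱼ − p i k·eₖ + p j k·p i j·eₖ)`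
for every valid triple. -/
def DExact {n : ℕ} (p : Fin n → Fin n → ℤ) (d : Fin n → Fin n → Fin n → ℤ) : Prop :=
  ∃ φ : Fin n → Fin n → ((Fin n → ℤ) →ₗ[ℤ] ℤ),
    (∀ i, φ i i = 0) ∧
    (∀ i j, i ≠ j → p i j = 0 → φ i j = φ j i) ∧
    ∀ i j k, ValidTriple p i j k →
      d i j k = φ i j (Pi.single k 1)
        + φ i k (Pi.single j 1 - p j k • Pi.single k 1)
        + φ j k (Pi.single i 1 - p i j • Pi.single j 1 - p i k • Pi.single k 1
            + (p j k * p i j) • Pi.single k 1)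

/-- The Cartan matrix of type `B₃` ordered starting from the short root (indices `1, 2, 3`
are `0, 1, 2`): `p(1,2) = −2`, `p(2,1) = −1`, `p(2,3) = p(3,2) = −1`, `p(1,3) = p(3,1) = 0`. -/
def cartanB3 : Fin 3 → Fin 3 → ℤ := ![![2, -2, 0], ![-1, 2, -1], ![0, -1, 2]]

/-- auxiliary: the linear form with coefficient vector `v`. -/
def lf (v : Fin 3 → ℤ) : (Fin 3 → ℤ) →ₗ[ℤ] ℤ :=
  v 0 • LinearMap.proj 0 + v 1 • LinearMap.proj 1 + v 2 • LinearMap.proj 2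

lemma lf_apply (v x : Fin 3 → ℤ) : lf v x = v 0 * x 0 + v 1 * x 1 + v 2 * x 2 := by
  simp [lf, smul_eq_mul]

/-- For the `B₃` Cartan matrix ordered starting from the short root, a closed
family `d = (dᵢⱼₖ)` is exact iff `d₃₂₁ + d₁₂₃ − d₁₂₁ + d₂₁₂ − d₃₁₂ − d₂₁₃` is even.
(This computes `CH³(Spin₇) ≅ ℤ/2ℤ`.) -/
theorem b3_closed_exact_iff_even (d : Fin 3 → Fin 3 → Fin 3 → ℤ)
    (hd : DClosed cartanB3 d) :
    DExact cartanB3 d ↔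
      2 ∣ (d 2 1 0 + d 0 1 2 - d 0 1 0 + d 1 0 1 - d 2 0 1 - d 1 0 2) := by
  obtain ⟨hc1, hc2, hc3⟩ := hd
  have h021 : d 0 2 1 = d 2 0 1 := hc1 0 2 1 ⟨by decide, by decide, Or.inl (by decide)⟩ (by decide)
  have h102 : d 1 0 2 = d 1 2 0 := hc2 1 0 2 ⟨by decide, by decide, Or.inl (by decide)⟩ (by decide)
  have h121 : d 1 2 1 = d 2 1 2 := hc3 1 2 (by decide) (by decide) (by decide)
  constructor
  · rintro ⟨φ, hφ0, hφsym, hφ⟩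
    have hsym := hφsym 2 0 (by decide) (by decide)
    have e1 := hφ 2 1 0 ⟨by decide, by decide, Or.inl (by decide)⟩
    have e2 := hφ 0 1 2 ⟨by decide, by decide, Or.inl (by decide)⟩
    have e3 := hφ 0 1 0 ⟨by decide, by decide, Or.inr (by decide)⟩
    have e4 := hφ 1 0 1 ⟨by decide, by decide, Or.inr (by decide)⟩
    have e5 := hφ 2 0 1 ⟨by decide, by decide, Or.inl (by decide)⟩
    have e6 := hφ 1 0 2 ⟨by decide, by decide, Or.inl (by decide)⟩
    simp only [cartanB3, Matrix.cons_val_zero, Matrix.cons_val_one, Matrix.head_cons,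
      Matrix.cons_val_two, Matrix.tail_cons, hφ0, hsym, map_sub, map_add, map_smul,
      smul_eq_mul, LinearMap.zero_apply] at e1 e2 e3 e4 e5 e6
    exact ⟨φ 1 2 (Pi.single 1 1) + φ 1 2 (Pi.single 2 1) - φ 2 1 (Pi.single 1 1), by
      linarith [e1, e2, e3, e4, e5, e6]⟩
  · rintro ⟨t, ht⟩
    refine ⟨fun i j =>
      lf (![![![0,0,0],
             ![d 1 0 1 - d 0 2 1, d 0 2 1, 0],
             ![0,0,0]],
           ![![d 0 1 0 - d 1 0 1 + d 0 2 1, 0, d 2 1 0 - d 0 1 0 + d 1 0 1 - d 0 2 1],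
             ![0,0,0],
             ![d 1 0 2 - d 2 1 0 + d 0 1 0 - d 1 0 1 + d 0 2 1, t, 0]],
           ![![0,0,0],
             ![0, 0, d 1 2 1 - t],
             ![0,0,0]]] i j), ?_, ?_, ?_⟩
    · intro i
      fin_cases i <;>
        (ext x; simp [lf, Matrix.cons_val_zero, Matrix.cons_val_one, Matrix.head_cons,
          Matrix.cons_val_two, Matrix.tail_cons, Matrix.vecHead, Matrix.vecTail])
    · intro i j hij hp
      fin_cases i <;> fin_cases j <;>
        first
          | rfl
          | exact absurd rfl hij
          | (exfalso; revert hp; decide)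
    · have f2 : (⟨2, by norm_num⟩ : Fin 3) = 2 := rfl
      have f1 : (⟨1, by norm_num⟩ : Fin 3) = 1 := rfl
      have f0 : (⟨0, by norm_num⟩ : Fin 3) = 0 := rfl
      have q1 : ((0 : Fin 3) = 1) = False := eq_false (by decide)
      have q2 : ((0 : Fin 3) = 2) = False := eq_false (by decide)
      have q3 : ((1 : Fin 3) = 0) = False := eq_false (by decide)
      have q4 : ((1 : Fin 3) = 2) = False := eq_false (by decide)
      have q5 : ((2 : Fin 3) = 0) = False := eq_false (by decide)
      have q6 : ((2 : Fin 3) = 1) = False := eq_false (by decide)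
      rintro i j k ⟨h1, h2, h3⟩
      fin_cases i <;> fin_cases j <;> fin_cases k <;>
        simp only [f0, f1, f2] at h1 h2 h3 ⊢ <;>
        first
          | exact absurd rfl h1
          | exact absurd rfl h2
          | exact absurd (by decide) (h3.resolve_left (not_not_intro rfl))
          | (simp only [lf_apply, Matrix.cons_val, Matrix.cons_val_zero, Matrix.cons_val_one, Matrix.head_cons,
               Matrix.cons_val_two, Matrix.tail_cons, Matrix.vecHead, Matrix.vecTail,
               cartanB3, Pi.single_apply, Pi.sub_apply, Pi.add_apply, Pi.smul_apply,
               smul_eq_mul, q1, q2, q3, q4, q5, q6, if_true, if_false, eq_self_iff_true]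
             norm_num
             try linarith [h021, h102, h121, ht])
      all_goals (simp [Matrix.vecHead, Matrix.vecTail, Fin.succ]; try linarith [h021, h102, h121, ht])
end

section
/- Let n ≥ 3 and let p be the Cartan matrix of type C_n ordered starting from the long root: p(i,i) = 2, p(1,2) = −1, p(2,1) = −2, p(i,i+1) = p(i+1,i) = −1 for 2 ≤ i ≤ n−1, and p(i,j) = 0 if |i − j| ≥ 2. Then every closed family d = (d_{ijk}) is exact. (This computes CH³(Sp_{2n}) = 0.) -/
/-- The Cartan matrix of type `Cₙ` ordered starting from the long root (indices `1, …, n` are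
`0, …, n−1`): `p(1,2) = −1`, `p(2,1) = −2`, `p(i,i+1) = p(i+1,i) = −1` for `2 ≤ i ≤ n−1`, and
`p(i,j) = 0` if `|i − j| ≥ 2`. -/
def cartanC (n : ℕ) (i j : Fin n) : ℤ :=
  if i = j then 2
  else if (i : ℕ) = 0 ∧ (j : ℕ) = 1 then -1
  else if (i : ℕ) = 1 ∧ (j : ℕ) = 0 then -2
  else if (i : ℕ) + 1 = j ∨ (j : ℕ) + 1 = i then -1 else 0

namespace CnAux

/-- ℕ-version of the Cartan matrix of type Cₙ. -/
def qN (a b : ℕ) : ℤ :=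
  if a = b then 2
  else if a = 0 ∧ b = 1 then -1
  else if a = 1 ∧ b = 0 then -2
  else if a + 1 = b ∨ b + 1 = a then -1 else 0

lemma qN_self (a : ℕ) : qN a a = 2 := by simp [qN]

lemma qN_rt' {a b : ℕ} (h : b = a + 1) : qN a b = -1 := by
  subst h; unfold qN; split_ifs <;> first | rfl | omega | tauto

def betaN (a : ℕ) : ℤ := if a = 0 then -2 else -1

lemma qN_lt' {a b : ℕ} (h : b = a + 1) : qN b a = betaN a := by
  subst h; unfold qN betaN; split_ifs <;> first | rfl | omega | tauto

lemma qN_lt1 {a b : ℕ} (h : b = a + 1) (ha : a ≠ 0) : qN b a = -1 := by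
  rw [qN_lt' h]; unfold betaN; rw [if_neg ha]

lemma qN_far {a b : ℕ} (h : a + 2 ≤ b) : qN a b = 0 := by
  unfold qN; split_ifs <;> first | rfl | omega | tauto

lemma qN_far' {a b : ℕ} (h : a + 2 ≤ b) : qN b a = 0 := by
  unfold qN; split_ifs <;> first | rfl | omega | tauto

lemma qN_zero {a b : ℕ} (h : qN a b = 0) : a ≠ b ∧ b ≠ a + 1 ∧ a ≠ b + 1 := by
  unfold qN at h; split_ifs at h <;> omega

lemma qN_ne {a b : ℕ} (h : qN a b ≠ 0) (hne : a ≠ b) : b = a + 1 ∨ a = b + 1 := by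
  unfold qN at h; split_ifs at h <;> omega

/-! ### The construction -/

def DD (f : ℕ → ℕ → ℕ → ℤ) (a : ℕ) : ℤ :=
  f (a+2) (a+1) a - f (a+1) a (a+2) + f a (a+1) (a+2) - f a (a+2) (a+1)

def Af (f : ℕ → ℕ → ℕ → ℤ) : ℕ → ℤ
  | 0 => f 1 0 1 - f 0 1 0
  | 1 => DD f 0 - 2 * f 0 1 0 + f 1 0 1
  | (a+2) => Af f (a+1) - f (a+1) (a+2) (a+1) + DD f (a+1)

def Bpf (f : ℕ → ℕ → ℕ → ℤ) (a : ℕ) : ℤ :=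
  if a = 0 then 2 * f 0 1 0 - f 1 0 1 else f a (a+1) a - Af f a

def wf (f : ℕ → ℕ → ℕ → ℤ) (a : ℕ) : ℤ :=
  f a (a+1) (a+2) - f a (a+2) (a+1) - Af f (a+1)

def Pf (f : ℕ → ℕ → ℕ → ℤ) (a : ℕ) : ℤ := f a (a+2) (a+1)

def Ppf (f : ℕ → ℕ → ℕ → ℤ) (a : ℕ) : ℤ := f (a+1) a (a+2) - wf f a

/-- values of φ_{a,a+1} -/
def xE (f : ℕ → ℕ → ℕ → ℤ) (a k : ℕ) : ℤ :=
  if k = a then Af f a else if k = a+1 then 0 else if k = a+2 then Pf f a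
  else if k+1 = a then 0 else f a (a+1) k

/-- values of φ_{a+1,a} -/
def xEL (f : ℕ → ℕ → ℕ → ℤ) (a k : ℕ) : ℤ :=
  if k = a then 0 else if k = a+1 then Bpf f a else if k = a+2 then Ppf f a
  else if k+1 = a then 0
  else if k+2 = a then f (a+1) a k + betaN a * wf f (a-2)
  else f (a+1) a k

/-- values of φ_{u,v} for a far pair u < v -/
def xF (f : ℕ → ℕ → ℕ → ℤ) (u v k : ℕ) : ℤ :=
  if v+2 ≤ k then f u v k else if v = u+2 ∧ k = v then wf f u else 0

def xx (f : ℕ → ℕ → ℕ → ℤ) (i j k : ℕ) : ℤ :=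
  if j = i+1 then xE f i k
  else if i = j+1 then xEL f j k
  else if i < j then xF f i j k else xF f j i k

def XX (f : ℕ → ℕ → ℕ → ℤ) (i j k : ℕ) : ℤ := if i = j then 0 else xx f i j k

lemma XX_self (f : ℕ → ℕ → ℕ → ℤ) (a c : ℕ) : XX f a a c = 0 := by simp [XX]

lemma XX_ne (f : ℕ → ℕ → ℕ → ℤ) {a b : ℕ} (h : a ≠ b) (c : ℕ) :
    XX f a b c = xx f a b c := by simp [XX, h]

/-! ### evaluation lemmas -/

variable (f : ℕ → ℕ → ℕ → ℤ)

lemma xxE_a {a b : ℕ} (h : b = a+1) : xx f a b a = Af f a := by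
  subst h; unfold xx xE; split_ifs <;> first | rfl | omega | tauto

lemma xxE_b {a b : ℕ} (h : b = a+1) : xx f a b b = 0 := by
  subst h; unfold xx xE; split_ifs <;> first | rfl | omega | tauto

lemma xxE_c {a b c : ℕ} (h : b = a+1) (h2 : c = a+2) : xx f a b c = Pf f a := by
  subst h; subst h2; unfold xx xE; split_ifs <;> first | rfl | omega | tauto

lemma xxE_m {a b c : ℕ} (h : b = a+1) (h2 : c+1 = a) : xx f a b c = 0 := by
  subst h; unfold xx xE; split_ifs <;> first | rfl | omega | tauto

lemma xxE_f {a b c : ℕ} (h : b = a+1) (n1 : c ≠ a) (n2 : c ≠ a+1) (n3 : c ≠ a+2)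
    (n4 : c+1 ≠ a) : xx f a b c = f a b c := by
  subst h; unfold xx xE; split_ifs <;> first | rfl | omega | tauto

lemma xxL_a {a b : ℕ} (h : b = a+1) : xx f b a a = 0 := by
  subst h; unfold xx xEL; split_ifs <;> first | rfl | omega | tauto

lemma xxL_b {a b : ℕ} (h : b = a+1) : xx f b a b = Bpf f a := by
  subst h; unfold xx xEL; split_ifs <;> first | rfl | omega | tauto

lemma xxL_c {a b c : ℕ} (h : b = a+1) (h2 : c = a+2) : xx f b a c = Ppf f a := by
  subst h; subst h2; unfold xx xEL; split_ifs <;> first | rfl | omega | tauto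

lemma xxL_m {a b c : ℕ} (h : b = a+1) (h2 : c+1 = a) : xx f b a c = 0 := by
  subst h; unfold xx xEL; split_ifs <;> first | rfl | omega | tauto

lemma xxL_mm {a b c : ℕ} (h : b = a+1) (h2 : c+2 = a) :
    xx f b a c = f b a c + betaN a * wf f c := by
  subst h; subst h2; unfold xx xEL; split_ifs <;>
    first | (rw [Nat.add_sub_cancel]) | omega

lemma xxL_f {a b c : ℕ} (h : b = a+1) (n1 : c ≠ a) (n2 : c ≠ a+1) (n3 : c ≠ a+2)
    (n4 : c+1 ≠ a) (n5 : c+2 ≠ a) : xx f b a c = f b a c := by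
  subst h; unfold xx xEL; split_ifs <;> first | rfl | omega | tauto

lemma xxF_hi {a b c : ℕ} (hlt : a < b) (hne : b ≠ a+1) (h : b+2 ≤ c) :
    xx f a b c = f a b c := by
  unfold xx xF; split_ifs <;> first | rfl | omega | tauto

lemma xxF_hi' {a b c : ℕ} (hlt : a < b) (hne : b ≠ a+1) (h : b+2 ≤ c) :
    xx f b a c = f a b c := by
  unfold xx xF; split_ifs <;> first | rfl | omega | tauto

lemma xxF_w {a b c : ℕ} (hlt : a < b) (hne : b ≠ a+1) (h : b = a+2) (h2 : c = b) :
    xx f a b c = wf f a := by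
  subst h2; unfold xx xF; split_ifs <;> first | rfl | omega | tauto

lemma xxF_w' {a b c : ℕ} (hlt : a < b) (hne : b ≠ a+1) (h : b = a+2) (h2 : c = b) :
    xx f b a c = wf f a := by
  subst h2; unfold xx xF; split_ifs <;> first | rfl | omega | tauto

lemma xxF_lo {a b c : ℕ} (hlt : a < b) (hne : b ≠ a+1) (h1 : ¬ b+2 ≤ c)
    (h2 : ¬ (b = a+2 ∧ c = b)) : xx f a b c = 0 := by
  unfold xx xF; split_ifs <;> first | rfl | omega | tauto

lemma xxF_lo' {a b c : ℕ} (hlt : a < b) (hne : b ≠ a+1) (h1 : ¬ b+2 ≤ c)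
    (h2 : ¬ (b = a+2 ∧ c = b)) : xx f b a c = 0 := by
  unfold xx xF; split_ifs <;> first | rfl | omega | tauto

lemma xx_symm {a b : ℕ} (hab : a ≠ b) (h1 : b ≠ a+1) (h2 : a ≠ b+1) (k : ℕ) :
    xx f a b k = xx f b a k := by
  unfold xx; split_ifs <;> first | rfl | omega | tauto


set_option maxHeartbeats 1000000 in
theorem main (f : ℕ → ℕ → ℕ → ℤ)
    (h1 : ∀ a b c : ℕ, a ≠ b → b ≠ c → a ≠ c → qN a b = 0 → f a b c = f b a c)
    (h2 : ∀ a b c : ℕ, a ≠ b → b ≠ c → a ≠ c → qN b c = 0 → f a b c = f a c b)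
    (h3 : ∀ a : ℕ, 1 ≤ a → f a (a+1) a = f (a+1) a (a+1))
    (i j k : ℕ) (hij : i ≠ j) (hjk : j ≠ k) (hv : i ≠ k ∨ qN i j ≠ 0) :
    f i j k = XX f i j k + (XX f i k j - qN j k * XX f i k k)
      + (XX f j k i - qN i j * XX f j k j - qN i k * XX f j k k
          + qN j k * qN i j * XX f j k k) := by
  by_cases hik : i = k
  · -- i = k, adjacent pair
    subst hik
    have hq : qN i j ≠ 0 := hv.resolve_left (fun h => h rfl)
    simp only [XX_ne f hij, XX_self f, XX_ne f (Ne.symm hij)]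
    rcases qN_ne hq hij with hA | hA
    · -- j = i + 1
      subst hA
      rw [show xx f i (i+1) i = Af f i from xxE_a f rfl,
        show xx f (i+1) i i = 0 from xxL_a f rfl,
        show xx f (i+1) i (i+1) = Bpf f i from xxL_b f rfl,
        show qN i (i+1) = (-1:ℤ) from qN_rt' rfl, qN_self]
      by_cases h0 : i = 0
      · subst h0; simp only [Bpf, Af, betaN, DD, eq_self_iff_true, if_true]; ring
      · simp only [Bpf]; rw [if_neg h0]; ring
    · -- i = j + 1
      subst hA
      rw [show xx f (j+1) j (j+1) = Bpf f j from xxL_b f rfl,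
        show xx f j (j+1) (j+1) = 0 from xxE_b f rfl,
        show xx f j (j+1) j = Af f j from xxE_a f rfl,
        show qN (j+1) j = betaN j from qN_lt' rfl, qN_self]
      by_cases h0 : j = 0
      · subst h0; simp only [Bpf, Af, betaN, DD, eq_self_iff_true, if_true]; ring
      · rw [show betaN j = (-1:ℤ) from by unfold betaN; rw [if_neg h0]]
        simp only [Bpf]; rw [if_neg h0]
        linarith [h3 j (by omega)]
  · -- i, j, k distinct
    simp only [XX_ne f hij, XX_ne f hik, XX_ne f hjk]
    rcases Nat.lt_trichotomy i j with h1' | h1' | h1'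
    · rcases Nat.lt_trichotomy j k with h2' | h2' | h2'
      · -- ORDER 1 : i < j < k
        by_cases hA : j = i+1 <;> by_cases hB : k = j+1
        · -- C
          subst hA
          have hk2 : k = i+2 := by omega
          subst hk2
          rw [show qN (i+1) (i+2) = (-1:ℤ) from qN_rt' (by omega),
            show qN i (i+1) = (-1:ℤ) from qN_rt' rfl,
            show qN i (i+2) = (0:ℤ) from qN_far (by omega),
            show xx f i (i+1) (i+2) = Pf f i from xxE_c f rfl rfl,
            show xx f i (i+2) (i+1) = 0 from
              xxF_lo f (by omega) (by omega) (by omega) (by omega),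
            show xx f i (i+2) (i+2) = wf f i from xxF_w f (by omega) (by omega) rfl rfl,
            show xx f (i+1) (i+2) i = 0 from xxE_m f (by omega) rfl,
            show xx f (i+1) (i+2) (i+1) = Af f (i+1) from xxE_a f (by omega),
            show xx f (i+1) (i+2) (i+2) = 0 from xxE_b f (by omega)]
          simp only [Pf, wf]; ring
        · -- A
          subst hA
          rw [show qN (i+1) k = (0:ℤ) from qN_far (by omega),
            show qN i (i+1) = (-1:ℤ) from qN_rt' rfl,
            show qN i k = (0:ℤ) from qN_far (by omega),
            show xx f i (i+1) k = f i (i+1) k from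
              xxE_f f rfl (by omega) (by omega) (by omega) (by omega),
            show xx f i k (i+1) = 0 from
              xxF_lo f (by omega) (by omega) (by omega) (by omega),
            show xx f (i+1) k i = 0 from
              xxF_lo f (by omega) (by omega) (by omega) (by omega),
            show xx f (i+1) k (i+1) = 0 from
              xxF_lo f (by omega) (by omega) (by omega) (by omega)]
          ring
        · -- B
          subst hB
          rw [show qN j (j+1) = (-1:ℤ) from qN_rt' rfl,
            show qN i j = (0:ℤ) from qN_far (by omega),
            show qN i (j+1) = (0:ℤ) from qN_far (by omega),
            show xx f i j (j+1) = 0 from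
              xxF_lo f (by omega) (by omega) (by omega) (by omega),
            show xx f i (j+1) j = 0 from
              xxF_lo f (by omega) (by omega) (by omega) (by omega),
            show xx f i (j+1) (j+1) = 0 from
              xxF_lo f (by omega) (by omega) (by omega) (by omega),
            show xx f j (j+1) i = f j (j+1) i from
              xxE_f f rfl (by omega) (by omega) (by omega) (by omega)]
          have e1 := h1 i j (j+1) hij (by omega) (by omega) (qN_far (by omega))
          have e2 := h2 j i (j+1) (by omega) (by omega) (by omega) (qN_far (by omega))
          linarith [e1, e2]
        · -- I
          rw [show qN j k = (0:ℤ) from qN_far (by omega),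
            show qN i j = (0:ℤ) from qN_far (by omega),
            show qN i k = (0:ℤ) from qN_far (by omega),
            show xx f i j k = f i j k from xxF_hi f h1' (by omega) (by omega),
            show xx f i k j = 0 from
              xxF_lo f (by omega) (by omega) (by omega) (by omega),
            show xx f j k i = 0 from
              xxF_lo f (by omega) (by omega) (by omega) (by omega)]
          ring
      · exact absurd h2' hjk
      · rcases Nat.lt_trichotomy i k with h3' | h3' | h3'
        · -- ORDER 2 : i < k < j
          by_cases hA : k = i+1 <;> by_cases hB : j = k+1
          · -- C
            subst hA
            have hj2 : j = i+2 := by omega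
            subst hj2
            rw [show qN (i+2) (i+1) = (-1:ℤ) from qN_lt1 (by omega) (by omega),
              show qN i (i+2) = (0:ℤ) from qN_far (by omega),
              show qN i (i+1) = (-1:ℤ) from qN_rt' rfl,
              show xx f i (i+2) (i+1) = 0 from
                xxF_lo f (by omega) (by omega) (by omega) (by omega),
              show xx f i (i+1) (i+2) = Pf f i from xxE_c f rfl rfl,
              show xx f i (i+1) (i+1) = 0 from xxE_b f rfl,
              show xx f (i+2) (i+1) i = 0 from xxL_m f (by omega) rfl,
              show xx f (i+2) (i+1) (i+1) = 0 from xxL_a f (by omega)]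
            simp only [Pf]; ring
          · -- A : k = i+1, j ≥ i+3
            subst hA
            rw [show qN j (i+1) = (0:ℤ) from qN_far' (by omega),
              show qN i j = (0:ℤ) from qN_far (by omega),
              show qN i (i+1) = (-1:ℤ) from qN_rt' rfl,
              show xx f i j (i+1) = 0 from
                xxF_lo f (by omega) (by omega) (by omega) (by omega),
              show xx f i (i+1) j = f i (i+1) j from
                xxE_f f rfl (by omega) (by omega) (by omega) (by omega),
              show xx f j (i+1) i = 0 from
                xxF_lo' f (by omega) (by omega) (by omega) (by omega),
              show xx f j (i+1) (i+1) = 0 from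
                xxF_lo' f (by omega) (by omega) (by omega) (by omega)]
            have e := h2 i j (i+1) hij (by omega) (by omega) (qN_far' (by omega))
            linarith [e]
          · -- B : j = k+1, k ≥ i+2
            subst hB
            rw [show qN (k+1) k = (-1:ℤ) from qN_lt1 rfl (by omega),
              show qN i (k+1) = (0:ℤ) from qN_far (by omega),
              show qN i k = (0:ℤ) from qN_far (by omega),
              show xx f i (k+1) k = 0 from
                xxF_lo f (by omega) (by omega) (by omega) (by omega),
              show xx f i k (k+1) = 0 from
                xxF_lo f (by omega) (by omega) (by omega) (by omega)]
            have e1 := h1 i (k+1) k (by omega) (by omega) hik (qN_far (by omega))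
            have e2 := h2 (k+1) i k (by omega) hik (by omega) (qN_far (by omega))
            by_cases hs : k = i+2
            · rw [show xx f i k k = wf f i from xxF_w f (by omega) (by omega) hs rfl,
                show xx f (k+1) k i = f (k+1) k i + betaN k * wf f i from
                  xxL_mm f rfl (by omega),
                show betaN k = (-1:ℤ) from by unfold betaN; rw [if_neg (by omega)]]
              linarith [e1, e2]
            · rw [show xx f i k k = 0 from
                  xxF_lo f (by omega) (by omega) (by omega) (by omega),
                show xx f (k+1) k i = f (k+1) k i from
                  xxL_f f rfl (by omega) (by omega) (by omega) (by omega) (by omega)]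
              linarith [e1, e2]
          · -- I
            rw [show qN j k = (0:ℤ) from qN_far' (by omega),
              show qN i j = (0:ℤ) from qN_far (by omega),
              show qN i k = (0:ℤ) from qN_far (by omega),
              show xx f i j k = 0 from
                xxF_lo f (by omega) (by omega) (by omega) (by omega),
              show xx f i k j = f i k j from xxF_hi f h3' (by omega) (by omega),
              show xx f j k i = 0 from
                xxF_lo' f (by omega) (by omega) (by omega) (by omega)]
            have e := h2 i j k hij hjk hik (qN_far' (by omega))
            linarith [e]
        · exact absurd h3' hik
        · -- ORDER 4 : k < i < j
          by_cases hA : i = k+1 <;> by_cases hB : j = i+1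
          · -- C
            subst hA
            have hj2 : j = k+2 := by omega
            subst hj2
            rw [show qN (k+2) k = (0:ℤ) from qN_far' (by omega),
              show qN (k+1) (k+2) = (-1:ℤ) from qN_rt' (by omega),
              show xx f (k+1) (k+2) k = 0 from xxE_m f (by omega) rfl,
              show xx f (k+1) k (k+2) = Ppf f k from xxL_c f rfl rfl,
              show xx f (k+2) k (k+1) = 0 from
                xxF_lo' f (by omega) (by omega) (by omega) (by omega),
              show xx f (k+2) k (k+2) = wf f k from
                xxF_w' f (by omega) (by omega) rfl rfl,
              show xx f (k+2) k k = 0 from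
                xxF_lo' f (by omega) (by omega) (by omega) (by omega)]
            have e := h2 (k+1) (k+2) k (by omega) (by omega) (by omega)
              (qN_far' (by omega))
            simp only [Ppf] at *
            linarith [e]
          · -- A : i = k+1, j ≥ k+3
            subst hA
            rw [show qN j k = (0:ℤ) from qN_far' (by omega),
              show qN (k+1) j = (0:ℤ) from qN_far (by omega),
              show xx f (k+1) j k = 0 from
                xxF_lo f (by omega) (by omega) (by omega) (by omega),
              show xx f (k+1) k j = f (k+1) k j from
                xxL_f f rfl (by omega) (by omega) (by omega) (by omega) (by omega),
              show xx f j k (k+1) = 0 from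
                xxF_lo' f (by omega) (by omega) (by omega) (by omega),
              show xx f j k k = 0 from
                xxF_lo' f (by omega) (by omega) (by omega) (by omega)]
            have e := h2 (k+1) j k (by omega) hjk (by omega) (qN_far' (by omega))
            linarith [e]
          · -- B : j = i+1, i ≥ k+2
            subst hB
            rw [show qN (i+1) k = (0:ℤ) from qN_far' (by omega),
              show qN i (i+1) = (-1:ℤ) from qN_rt' rfl,
              show qN i k = (0:ℤ) from qN_far' (by omega),
              show xx f i (i+1) k = f i (i+1) k from
                xxE_f f rfl (by omega) (by omega) (by omega) (by omega),
              show xx f i k (i+1) = 0 from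
                xxF_lo' f (by omega) (by omega) (by omega) (by omega),
              show xx f (i+1) k i = 0 from
                xxF_lo' f (by omega) (by omega) (by omega) (by omega),
              show xx f (i+1) k (i+1) = 0 from
                xxF_lo' f (by omega) (by omega) (by omega) (by omega)]
            ring
          · -- I
            rw [show qN j k = (0:ℤ) from qN_far' (by omega),
              show qN i j = (0:ℤ) from qN_far (by omega),
              show qN i k = (0:ℤ) from qN_far' (by omega),
              show xx f i j k = 0 from
                xxF_lo f (by omega) (by omega) (by omega) (by omega),
              show xx f i k j = f k i j from xxF_hi' f h3' (by omega) (by omega),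
              show xx f j k i = 0 from
                xxF_lo' f (by omega) (by omega) (by omega) (by omega)]
            have e1 := h2 i j k hij hjk hik (qN_far' (by omega))
            have e2 := h1 i k j hik (by omega) hij (qN_far' (by omega))
            linarith [e1, e2]
    · exact absurd h1' hij
    · -- j < i
      rcases Nat.lt_trichotomy i k with h2' | h2' | h2'
      · -- ORDER 3 : j < i < k
        by_cases hA : i = j+1 <;> by_cases hB : k = i+1
        · -- C
          subst hA
          have hk2 : k = j+2 := by omega
          subst hk2
          rw [show qN j (j+2) = (0:ℤ) from qN_far (by omega),
            show qN (j+1) (j+2) = (-1:ℤ) from qN_rt' (by omega),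
            show xx f (j+1) j (j+2) = Ppf f j from xxL_c f rfl rfl,
            show xx f (j+1) (j+2) j = 0 from xxE_m f (by omega) rfl,
            show xx f j (j+2) (j+1) = 0 from
              xxF_lo f (by omega) (by omega) (by omega) (by omega),
            show xx f j (j+2) j = 0 from
              xxF_lo f (by omega) (by omega) (by omega) (by omega),
            show xx f j (j+2) (j+2) = wf f j from xxF_w f (by omega) (by omega) rfl rfl]
          simp only [Ppf]; ring
        · -- A : i = j+1, k ≥ j+3
          subst hA
          rw [show qN j k = (0:ℤ) from qN_far (by omega),
            show qN (j+1) k = (0:ℤ) from qN_far (by omega),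
            show xx f (j+1) j k = f (j+1) j k from
              xxL_f f rfl (by omega) (by omega) (by omega) (by omega) (by omega),
            show xx f (j+1) k j = 0 from
              xxF_lo f (by omega) (by omega) (by omega) (by omega),
            show xx f j k (j+1) = 0 from
              xxF_lo f (by omega) (by omega) (by omega) (by omega),
            show xx f j k j = 0 from
              xxF_lo f (by omega) (by omega) (by omega) (by omega)]
          ring
        · -- B : k = i+1, i ≥ j+2
          subst hB
          rw [show qN j (i+1) = (0:ℤ) from qN_far (by omega),
            show qN i j = (0:ℤ) from qN_far' (by omega),
            show qN i (i+1) = (-1:ℤ) from qN_rt' rfl,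
            show xx f i j (i+1) = 0 from
              xxF_lo' f (by omega) (by omega) (by omega) (by omega),
            show xx f i (i+1) j = f i (i+1) j from
              xxE_f f rfl (by omega) (by omega) (by omega) (by omega),
            show xx f j (i+1) i = 0 from
              xxF_lo f (by omega) (by omega) (by omega) (by omega),
            show xx f j (i+1) (i+1) = 0 from
              xxF_lo f (by omega) (by omega) (by omega) (by omega)]
          have e := h2 i j (i+1) hij (by omega) (by omega) (qN_far (by omega))
          linarith [e]
        · -- I
          rw [show qN j k = (0:ℤ) from qN_far (by omega),
            show qN i j = (0:ℤ) from qN_far' (by omega),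
            show qN i k = (0:ℤ) from qN_far (by omega),
            show xx f i j k = f j i k from xxF_hi' f h1' (by omega) (by omega),
            show xx f i k j = 0 from
              xxF_lo f (by omega) (by omega) (by omega) (by omega),
            show xx f j k i = 0 from
              xxF_lo f (by omega) (by omega) (by omega) (by omega)]
          have e := h1 i j k hij hjk hik (qN_far' (by omega))
          linarith [e]
      · exact absurd h2' hik
      · rcases Nat.lt_trichotomy j k with h3' | h3' | h3'
        · -- ORDER 5 : j < k < i
          by_cases hA : k = j+1 <;> by_cases hB : i = k+1
          · -- C
            subst hA
            have hi2 : i = j+2 := by omega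
            subst hi2
            rw [show qN j (j+1) = (-1:ℤ) from qN_rt' rfl,
              show qN (j+2) j = (0:ℤ) from qN_far' (by omega),
              show qN (j+2) (j+1) = (-1:ℤ) from qN_lt1 (by omega) (by omega),
              show xx f (j+2) j (j+1) = 0 from
                xxF_lo' f (by omega) (by omega) (by omega) (by omega),
              show xx f (j+2) (j+1) j = 0 from xxL_m f (by omega) rfl,
              show xx f (j+2) (j+1) (j+1) = 0 from xxL_a f (by omega),
              show xx f j (j+1) (j+2) = Pf f j from xxE_c f rfl rfl,
              show xx f j (j+1) (j+1) = 0 from xxE_b f rfl]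
            have e := h1 (j+2) j (j+1) (by omega) (by omega) (by omega)
              (qN_far' (by omega))
            simp only [Pf] at *
            linarith [e]
          · -- A : k = j+1, i ≥ j+3
            subst hA
            rw [show qN j (j+1) = (-1:ℤ) from qN_rt' rfl,
              show qN i j = (0:ℤ) from qN_far' (by omega),
              show qN i (j+1) = (0:ℤ) from qN_far' (by omega),
              show xx f i j (j+1) = 0 from
                xxF_lo' f (by omega) (by omega) (by omega) (by omega),
              show xx f i (j+1) j = 0 from
                xxF_lo' f (by omega) (by omega) (by omega) (by omega),
              show xx f i (j+1) (j+1) = 0 from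
                xxF_lo' f (by omega) (by omega) (by omega) (by omega),
              show xx f j (j+1) i = f j (j+1) i from
                xxE_f f rfl (by omega) (by omega) (by omega) (by omega)]
            have e1 := h1 i j (j+1) hij (by omega) (by omega) (qN_far' (by omega))
            have e2 := h2 j i (j+1) (by omega) (by omega) (by omega) (qN_far' (by omega))
            linarith [e1, e2]
          · -- B : i = k+1, k ≥ j+2
            subst hB
            rw [show qN j k = (0:ℤ) from qN_far (by omega),
              show qN (k+1) j = (0:ℤ) from qN_far' (by omega),
              show qN (k+1) k = (-1:ℤ) from qN_lt1 rfl (by omega),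
              show xx f (k+1) j k = 0 from
                xxF_lo' f (by omega) (by omega) (by omega) (by omega),
              show xx f j k (k+1) = 0 from
                xxF_lo f (by omega) (by omega) (by omega) (by omega)]
            have e := h2 (k+1) j k (by omega) hjk (by omega) (qN_far (by omega))
            by_cases hs : j+2 = k
            · rw [show xx f (k+1) k j = f (k+1) k j + betaN k * wf f j from
                  xxL_mm f rfl hs,
                show betaN k = (-1:ℤ) from by unfold betaN; rw [if_neg (by omega)],
                show xx f j k k = wf f j from
                  xxF_w f (by omega) (by omega) (by omega) rfl]
              linarith [e]
            · rw [show xx f (k+1) k j = f (k+1) k j from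
                  xxL_f f rfl (by omega) (by omega) (by omega) (by omega) (by omega),
                show xx f j k k = 0 from
                  xxF_lo f (by omega) (by omega) (by omega) (by omega)]
              linarith [e]
          · -- I
            rw [show qN j k = (0:ℤ) from qN_far (by omega),
              show qN i j = (0:ℤ) from qN_far' (by omega),
              show qN i k = (0:ℤ) from qN_far' (by omega),
              show xx f i j k = 0 from
                xxF_lo' f (by omega) (by omega) (by omega) (by omega),
              show xx f i k j = 0 from
                xxF_lo' f (by omega) (by omega) (by omega) (by omega),
              show xx f j k i = f j k i from xxF_hi f h3' (by omega) (by omega)]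
            have e1 := h1 i j k hij hjk hik (qN_far' (by omega))
            have e2 := h2 j i k (by omega) hik hjk (qN_far' (by omega))
            linarith [e1, e2]
        · exact absurd h3' hjk
        · -- ORDER 6 : k < j < i
          by_cases hA : j = k+1 <;> by_cases hB : i = j+1
          · -- C
            subst hA
            have hi2 : i = k+2 := by omega
            subst hi2
            rw [show qN (k+2) (k+1) = (-1:ℤ) from qN_lt1 (by omega) (by omega),
              show qN (k+2) k = (0:ℤ) from qN_far' (by omega),
              show xx f (k+2) (k+1) k = 0 from xxL_m f (by omega) rfl,
              show xx f (k+2) k (k+1) = 0 from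
                xxF_lo' f (by omega) (by omega) (by omega) (by omega),
              show xx f (k+2) k k = 0 from
                xxF_lo' f (by omega) (by omega) (by omega) (by omega),
              show xx f (k+1) k (k+2) = Ppf f k from xxL_c f rfl rfl,
              show xx f (k+1) k (k+1) = Bpf f k from xxL_b f rfl,
              show xx f (k+1) k k = 0 from xxL_a f rfl]
            by_cases h0 : k = 0
            · subst h0
              simp only [Ppf, Bpf, wf, Af, DD, if_pos rfl]
              norm_num [Af]
              ring
            · obtain ⟨m, rfl⟩ := Nat.exists_eq_succ_of_ne_zero h0
              have hAf : Af f (m+1+1) = Af f (m+1) - f (m+1) (m+2) (m+1) + DD f (m+1) :=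
                rfl
              simp only [Ppf, Bpf, wf, DD] at *
              rw [if_neg (by omega : ¬ m+1 = 0)]
              rw [show m+1+1+1 = m+3 from by omega, show m+1+1 = m+2 from by omega] at *
              linarith [hAf]
          · -- A : j = k+1, i ≥ k+3
            subst hA
            rw [show qN i (k+1) = (0:ℤ) from qN_far' (by omega),
              show qN i k = (0:ℤ) from qN_far' (by omega),
              show xx f i (k+1) k = 0 from
                xxF_lo' f (by omega) (by omega) (by omega) (by omega),
              show xx f i k (k+1) = 0 from
                xxF_lo' f (by omega) (by omega) (by omega) (by omega),
              show xx f i k k = 0 from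
                xxF_lo' f (by omega) (by omega) (by omega) (by omega),
              show xx f (k+1) k i = f (k+1) k i from
                xxL_f f rfl (by omega) (by omega) (by omega) (by omega) (by omega)]
            have e1 := h1 i (k+1) k hij (by omega) hik (qN_far' (by omega))
            have e2 := h2 (k+1) i k (by omega) hik (by omega) (qN_far' (by omega))
            linarith [e1, e2]
          · -- B : i = j+1, j ≥ k+2
            subst hB
            rw [show qN j k = (0:ℤ) from qN_far' (by omega),
              show qN (j+1) j = (-1:ℤ) from qN_lt1 rfl (by omega),
              show qN (j+1) k = (0:ℤ) from qN_far' (by omega),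
              show xx f (j+1) k j = 0 from
                xxF_lo' f (by omega) (by omega) (by omega) (by omega),
              show xx f j k (j+1) = 0 from
                xxF_lo' f (by omega) (by omega) (by omega) (by omega)]
            by_cases hs : k+2 = j
            · rw [show xx f (j+1) j k = f (j+1) j k + betaN j * wf f k from
                  xxL_mm f rfl hs,
                show betaN j = (-1:ℤ) from by unfold betaN; rw [if_neg (by omega)],
                show xx f j k j = wf f k from
                  xxF_w' f (by omega) (by omega) (by omega) rfl]
              ring
            · rw [show xx f (j+1) j k = f (j+1) j k from
                  xxL_f f rfl (by omega) (by omega) (by omega) (by omega) (by omega),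
                show xx f j k j = 0 from
                  xxF_lo' f (by omega) (by omega) (by omega) (by omega)]
              ring
          · -- I
            rw [show qN j k = (0:ℤ) from qN_far' (by omega),
              show qN i j = (0:ℤ) from qN_far' (by omega),
              show qN i k = (0:ℤ) from qN_far' (by omega),
              show xx f i j k = 0 from
                xxF_lo' f (by omega) (by omega) (by omega) (by omega),
              show xx f i k j = 0 from
                xxF_lo' f (by omega) (by omega) (by omega) (by omega),
              show xx f j k i = f k j i from xxF_hi' f h3' (by omega) (by omega)]
            have e1 := h1 i j k hij hjk hik (qN_far' (by omega))
            have e2 := h2 j i k (by omega) hik hjk (qN_far' (by omega))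
            have e3 := h1 j k i hjk (by omega) (by omega) (qN_far' (by omega))
            linarith [e1, e2, e3]



def dN (n : ℕ) (d : Fin n → Fin n → Fin n → ℤ) (a b c : ℕ) : ℤ :=
  if h : a < n ∧ b < n ∧ c < n then d ⟨a, h.1⟩ ⟨b, h.2.1⟩ ⟨c, h.2.2⟩ else 0

def Lmap {n : ℕ} (c : Fin n → ℤ) : (Fin n → ℤ) →ₗ[ℤ] ℤ where
  toFun y := ∑ l, c l * y l
  map_add' a b := by simp [mul_add, Finset.sum_add_distrib]
  map_smul' r a := by
    simp only [Pi.smul_apply, smul_eq_mul, RingHom.id_apply, Finset.mul_sum]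
    exact Finset.sum_congr rfl fun x _ => by ring

lemma Lmap_single {n : ℕ} (c : Fin n → ℤ) (k : Fin n) : Lmap c (Pi.single k 1) = c k := by
  simp only [Lmap, LinearMap.coe_mk, AddHom.coe_mk]
  rw [Finset.sum_eq_single k]
  · simp
  · intro b _ hb; simp [Pi.single_apply, hb]
  · intro h; exact absurd (Finset.mem_univ k) h

end CnAux

/-- For `n ≥ 3` and the Cartan matrix of type `Cₙ` ordered starting from the long
root, every closed family `d = (dᵢⱼₖ)` is exact. (This computes `CH³(Sp_{2n}) = 0`.) -/
theorem cn_closed_is_exact {n : ℕ} (hn : 3 ≤ n) (d : Fin n → Fin n → Fin n → ℤ)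
    (hd : DClosed (cartanC n) d) :
    DExact (cartanC n) d := by
  classical
  obtain ⟨hd1, hd2, hd3⟩ := hd
  set f : ℕ → ℕ → ℕ → ℤ := CnAux.dN n d with hf
  have hqc : ∀ i j : Fin n, cartanC n i j = CnAux.qN i.1 j.1 := by
    intro i j; simp [cartanC, CnAux.qN, Fin.ext_iff]
  have hdval : ∀ i j k : Fin n, f i.1 j.1 k.1 = d i j k := by
    intro i j k
    simp only [hf, CnAux.dN]
    rw [dif_pos ⟨i.2, j.2, k.2⟩]
  have h1 : ∀ a b c : ℕ, a ≠ b → b ≠ c → a ≠ c → CnAux.qN a b = 0 →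
      f a b c = f b a c := by
    intro a b c hab hbc hac hq
    by_cases h : a < n ∧ b < n ∧ c < n
    · obtain ⟨ha, hb, hc⟩ := h
      simp only [hf, CnAux.dN]
      rw [dif_pos ⟨ha, hb, hc⟩, dif_pos ⟨hb, ha, hc⟩]
      exact hd1 ⟨a, ha⟩ ⟨b, hb⟩ ⟨c, hc⟩
        ⟨Fin.ne_of_val_ne hab, Fin.ne_of_val_ne hbc, Or.inl (Fin.ne_of_val_ne hac)⟩
        (by rw [hqc]; exact hq)
    · simp only [hf, CnAux.dN]
      rw [dif_neg h, dif_neg (by tauto)]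
  have h2 : ∀ a b c : ℕ, a ≠ b → b ≠ c → a ≠ c → CnAux.qN b c = 0 →
      f a b c = f a c b := by
    intro a b c hab hbc hac hq
    by_cases h : a < n ∧ b < n ∧ c < n
    · obtain ⟨ha, hb, hc⟩ := h
      simp only [hf, CnAux.dN]
      rw [dif_pos ⟨ha, hb, hc⟩, dif_pos ⟨ha, hc, hb⟩]
      exact hd2 ⟨a, ha⟩ ⟨b, hb⟩ ⟨c, hc⟩
        ⟨Fin.ne_of_val_ne hab, Fin.ne_of_val_ne hbc, Or.inl (Fin.ne_of_val_ne hac)⟩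
        (by rw [hqc]; exact hq)
    · simp only [hf, CnAux.dN]
      rw [dif_neg h, dif_neg (by tauto)]
  have h3 : ∀ a : ℕ, 1 ≤ a → f a (a+1) a = f (a+1) a (a+1) := by
    intro a ha1
    by_cases h : a + 1 < n
    · have ha : a < n := by omega
      simp only [hf, CnAux.dN]
      rw [dif_pos ⟨ha, h, ha⟩, dif_pos ⟨h, ha, h⟩]
      exact hd3 ⟨a, ha⟩ ⟨a+1, h⟩ (Fin.ne_of_val_ne (show a ≠ a+1 by omega))
        (by rw [hqc]; exact CnAux.qN_rt' rfl)
        (by rw [hqc]; exact CnAux.qN_lt1 rfl (show a ≠ 0 by omega))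
    · simp only [hf, CnAux.dN]
      rw [dif_neg (by omega), dif_neg (by omega)]
  set φ : Fin n → Fin n → ((Fin n → ℤ) →ₗ[ℤ] ℤ) :=
    fun i j => if i = j then 0 else CnAux.Lmap (fun l => CnAux.xx f i.1 j.1 l.1) with hφ
  have hev : ∀ a b c : Fin n, φ a b (Pi.single c 1) = CnAux.XX f a.1 b.1 c.1 := by
    intro a b c
    by_cases h : a = b
    · subst h
      simp only [hφ, if_pos rfl, LinearMap.zero_apply, CnAux.XX_self f]
    · simp only [hφ]
      rw [if_neg h, CnAux.Lmap_single, CnAux.XX_ne f (fun hh => h (Fin.ext hh))]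
  refine ⟨φ, fun i => if_pos rfl, ?_, ?_⟩
  · intro i j hne h0
    have hq : CnAux.qN i.1 j.1 = 0 := by rw [← hqc]; exact h0
    obtain ⟨hne2, hna, hnb⟩ := CnAux.qN_zero hq
    simp only [hφ]
    rw [if_neg hne, if_neg (Ne.symm hne)]
    have : (fun l : Fin n => CnAux.xx f i.1 j.1 l.1)
        = (fun l : Fin n => CnAux.xx f j.1 i.1 l.1) :=
      funext fun l => CnAux.xx_symm f hne2 hna hnb l.1
    rw [this]
  · intro i j k hvt
    obtain ⟨hij, hjk, hor⟩ := hvt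
    have hijv : i.1 ≠ j.1 := fun h => hij (Fin.ext h)
    have hjkv : j.1 ≠ k.1 := fun h => hjk (Fin.ext h)
    have horv : i.1 ≠ k.1 ∨ CnAux.qN i.1 j.1 ≠ 0 := by
      rcases hor with h | h
      · exact Or.inl fun hh => h (Fin.ext hh)
      · exact Or.inr (by rw [← hqc]; exact h)
    have key := CnAux.main f h1 h2 h3 i.1 j.1 k.1 hijv hjkv horv
    rw [hdval i j k] at key
    simp only [map_sub, map_add, map_smul, smul_eq_mul, hev, hqc]
    linarith [key]
end
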